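/- arXiv:1603.03734 — 6 statements merged into one kernel-verified Lean document; each statement's English description precedes it below -/
import Mathlib

section
/- Let n be a positive integer, A an (n+1)×(n+1) real matrix, b, l column vectors in ℝ^{n+1}, and c a row vector in ℝ^{n+1}. Let u, d₂ : ℝ → ℝ be functions and suppose x, p, q : ℝ → ℝ^{n+1} are differentiable and satisfy, for all t: x'(t) = A·x(t) + b·(u(t) + d₂(t)), p'(t) = A·p(t) + b·u(t) + l·(c·x(t) − c·p(t)), and q'(t) = (A − l·c)·q(t) + b·d₂(t). Then ε := x − p − q satisfies ε'(t) = (A − l·c)·ε(t) for all t. -/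
open Matrix

lemma vecMulVec_mulVec' {n : ℕ} (l c v : Fin (n + 1) → ℝ) :
    (Matrix.vecMulVec l c).mulVec v = (c ⬝ᵥ v) • l := by
  funext i
  simp [Matrix.mulVec, Matrix.vecMulVec_apply, dotProduct, Finset.sum_mul, mul_assoc,
    mul_comm (l i)]

/-- **Lemma 1 of the paper.** If the plant `x' = A x + b (u + d₂)`, the extended state
observer `p' = A p + b u + l (c·x − c·p)` and the disturbance filter
`q' = (A − l·c) q + b d₂` hold for all `t`, then the error `ε = x − p − q` satisfies the
homogeneous observer-error dynamics `ε' = (A − l·c) ε`. -/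
theorem eso_filter_error_dynamics (n : ℕ) (hn : 0 < n)
    (A : Matrix (Fin (n + 1)) (Fin (n + 1)) ℝ)
    (b l c : Fin (n + 1) → ℝ)
    (u d₂ : ℝ → ℝ) (x p q : ℝ → Fin (n + 1) → ℝ)
    (hx : ∀ t, HasDerivAt x (A.mulVec (x t) + (u t + d₂ t) • b) t)
    (hp : ∀ t, HasDerivAt p (A.mulVec (p t) + u t • b + (c ⬝ᵥ x t - c ⬝ᵥ p t) • l) t)
    (hq : ∀ t, HasDerivAt q ((A - Matrix.vecMulVec l c).mulVec (q t) + d₂ t • b) t) :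
    ∀ t, HasDerivAt (fun s => x s - p s - q s)
      ((A - Matrix.vecMulVec l c).mulVec (x t - p t - q t)) t := by
  intro t
  have h := ((hx t).sub (hp t)).sub (hq t)
  refine h.congr_deriv ?_
  simp only [Matrix.sub_mulVec, Matrix.mulVec_sub, vecMulVec_mulVec', dotProduct_sub,
    sub_smul, add_smul]
  module
end

section
/- Under the hypotheses of the Lyapunov computation — A_cᵀ·P + P·A_c = −2·Q with P symmetric positive definite, Γ symmetric positive definite, Q symmetric positive semidefinite, φ : ℝ → ℝ^{n×s} continuous, e, ψ differentiable with e' = A_c·e + φ·ψ and ψ' = −Γ⁻¹·φᵀ·P·e — the functions e and ψ are bounded on [0, ∞): there exists K > 0 such that ‖e(t)‖ ≤ K and ‖ψ(t)‖ ≤ K for all t ≥ 0. -/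
open Matrix

lemma mv_dp {m n : ℕ} (A : Matrix (Fin m) (Fin n) ℝ) (x : Fin n → ℝ) (y : Fin m → ℝ) :
    (A.mulVec x) ⬝ᵥ y = x ⬝ᵥ (Aᵀ.mulVec y) := by
  rw [dotProduct_comm, Matrix.dotProduct_mulVec, ← Matrix.mulVec_transpose, dotProduct_comm]

lemma posdef_lower {n : ℕ} (hn : 0 < n) (P : Matrix (Fin n) (Fin n) ℝ) (hP : P.PosDef) :
    ∃ c > 0, ∀ x : Fin n → ℝ, c * ‖x‖^2 ≤ x ⬝ᵥ P.mulVec x := by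
  haveI : NeZero n := ⟨hn.ne'⟩
  have hcont : Continuous (fun x : Fin n → ℝ => x ⬝ᵥ P.mulVec x) :=
    continuous_id.dotProduct (continuous_const.matrix_mulVec continuous_id)
  have hS : IsCompact (Metric.sphere (0 : Fin n → ℝ) 1) := isCompact_sphere 0 1
  have hne : (Metric.sphere (0 : Fin n → ℝ) 1).Nonempty := by
    refine ⟨Pi.single 0 1, ?_⟩
    simp [Pi.norm_single]
  obtain ⟨x₀, hx₀, hmin⟩ := hS.exists_isMinOn hne hcont.continuousOn
  have hx₀ne : x₀ ≠ 0 := by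
    intro h
    rw [h] at hx₀
    simp at hx₀
  have hc : 0 < x₀ ⬝ᵥ P.mulVec x₀ := by
    have := hP.dotProduct_mulVec_pos hx₀ne
    simpa using this
  refine ⟨_, hc, fun x => ?_⟩
  rcases eq_or_ne x 0 with rfl | hx
  · simp
  · have hnx : 0 < ‖x‖ := norm_pos_iff.mpr hx
    set u := ‖x‖⁻¹ • x with hu
    have hu1 : u ∈ Metric.sphere (0 : Fin n → ℝ) 1 := by
      simp [hu, norm_smul, abs_of_pos (inv_pos.mpr hnx), inv_mul_cancel₀ hnx.ne']
    have hq : x ⬝ᵥ P.mulVec x = ‖x‖^2 * (u ⬝ᵥ P.mulVec u) := by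
      rw [hu]
      rw [Matrix.mulVec_smul, smul_dotProduct, dotProduct_smul]
      field_simp
      simp only [smul_eq_mul, one_div]
      rw [← mul_assoc, ← mul_assoc, sq, mul_assoc ‖x‖ ‖x‖, mul_inv_cancel₀ hnx.ne', mul_one,
        mul_inv_cancel₀ hnx.ne', one_mul]
    rw [hq]
    have hle : x₀ ⬝ᵥ P.mulVec x₀ ≤ u ⬝ᵥ P.mulVec u := hmin hu1
    nlinarith [sq_nonneg ‖x‖]

lemma hasDerivAt_quad {n : ℕ} (M : Matrix (Fin n) (Fin n) ℝ) {f : ℝ → Fin n → ℝ}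
    {f' : Fin n → ℝ} {t : ℝ} (hf : HasDerivAt f f' t) :
    HasDerivAt (fun t => f t ⬝ᵥ M.mulVec (f t))
      (f' ⬝ᵥ M.mulVec (f t) + f t ⬝ᵥ M.mulVec f') t := by
  have hcoord : ∀ i, HasDerivAt (fun t => f t i) (f' i) t := hasDerivAt_pi.mp hf
  have h1 : ∀ i, HasDerivAt (fun t => f t i * ∑ j, M i j * f t j)
      (f' i * (∑ j, M i j * f t j) + f t i * (∑ j, M i j * f' j)) t := by
    intro i
    exact (hcoord i).mul (HasDerivAt.fun_sum fun j _ => (hcoord j).const_mul (M i j))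
  have hsum : HasDerivAt (fun t => ∑ i, f t i * ∑ j, M i j * f t j)
      (∑ i, (f' i * (∑ j, M i j * f t j) + f t i * (∑ j, M i j * f' j))) t :=
    HasDerivAt.fun_sum fun i _ => h1 i
  have heq : (fun t => f t ⬝ᵥ M.mulVec (f t)) = fun t => ∑ i, f t i * ∑ j, M i j * f t j := by
    funext u; simp [dotProduct, Matrix.mulVec]
  rw [heq]
  convert hsum using 1
  simp [dotProduct, Matrix.mulVec, Finset.sum_add_distrib]

lemma lyap_deriv_eq {n s : ℕ} (Ac P Q : Matrix (Fin n) (Fin n) ℝ)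
    (hPsymm : P.IsSymm) (hLyap : Acᵀ * P + P * Ac = (-2 : ℝ) • Q)
    (Γ : Matrix (Fin s) (Fin s) ℝ) (hΓsymm : Γ.IsSymm) (hΓdet : IsUnit Γ.det)
    (F : Matrix (Fin n) (Fin s) ℝ) (a : Fin n → ℝ) (b : Fin s → ℝ) :
    (Ac.mulVec a + F.mulVec b) ⬝ᵥ P.mulVec a + a ⬝ᵥ P.mulVec (Ac.mulVec a + F.mulVec b)
      + ((-(Γ⁻¹.mulVec (Fᵀ.mulVec (P.mulVec a)))) ⬝ᵥ Γ.mulVec b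
      + b ⬝ᵥ Γ.mulVec (-(Γ⁻¹.mulVec (Fᵀ.mulVec (P.mulVec a)))))
      = -2 * (a ⬝ᵥ Q.mulVec a) := by
  set w := Fᵀ.mulVec (P.mulVec a) with hw
  have hΓinv_symm : (Γ⁻¹)ᵀ = Γ⁻¹ := by
    rw [Matrix.transpose_nonsing_inv, hΓsymm.eq]
  have h5 : (Γ⁻¹.mulVec w) ⬝ᵥ Γ.mulVec b = w ⬝ᵥ b := by
    rw [mv_dp, hΓinv_symm, Matrix.mulVec_mulVec, Matrix.nonsing_inv_mul _ hΓdet, Matrix.one_mulVec]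
  have h6 : b ⬝ᵥ Γ.mulVec (Γ⁻¹.mulVec w) = b ⬝ᵥ w := by
    rw [Matrix.mulVec_mulVec, Matrix.mul_nonsing_inv _ hΓdet, Matrix.one_mulVec]
  have h3 : (F.mulVec b) ⬝ᵥ P.mulVec a = b ⬝ᵥ w := by
    rw [mv_dp, hw]
  have h4 : a ⬝ᵥ P.mulVec (F.mulVec b) = b ⬝ᵥ w := by
    rw [dotProduct_comm, mv_dp, hPsymm.eq, h3]
  have h1 : (Ac.mulVec a) ⬝ᵥ P.mulVec a = a ⬝ᵥ ((Acᵀ * P).mulVec a) := by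
    rw [mv_dp, Matrix.mulVec_mulVec]
  have h2 : a ⬝ᵥ P.mulVec (Ac.mulVec a) = a ⬝ᵥ ((P * Ac).mulVec a) := by
    rw [Matrix.mulVec_mulVec]
  have hsum : a ⬝ᵥ ((Acᵀ * P).mulVec a) + a ⬝ᵥ ((P * Ac).mulVec a) = -2 * (a ⬝ᵥ Q.mulVec a) := by
    rw [← dotProduct_add, ← Matrix.add_mulVec, hLyap]
    simp [Matrix.smul_mulVec, Matrix.neg_mulVec, dotProduct_smul, dotProduct_neg, smul_eq_mul]
  rw [add_dotProduct, Matrix.mulVec_add, dotProduct_add, neg_dotProduct, Matrix.mulVec_neg,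
    dotProduct_neg, h5, h6, h3, h4, h1, h2, dotProduct_comm w b]
  linarith [hsum]

/-- **Boundedness from the Lyapunov computation.** Under the Lyapunov equation
`A_cᵀ·P + P·A_c = −2·Q` with `P` symmetric positive definite, `Γ` symmetric positive
definite, `Q` symmetric positive semidefinite, the error dynamics `e' = A_c·e + φ·ψ`
and the update law `ψ' = −Γ⁻¹·φᵀ·P·e`, the functions `e` and `ψ` are bounded on
`[0, ∞)`. -/
theorem adaptive_observer_bounded (n s : ℕ) (hn : 0 < n) (hs : 0 < s)
    (Ac P Q : Matrix (Fin n) (Fin n) ℝ)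
    (hPsymm : P.IsSymm) (hPpos : P.PosDef)
    (hQsymm : Q.IsSymm) (hQpos : Q.PosSemidef)
    (hLyap : Acᵀ * P + P * Ac = (-2 : ℝ) • Q)
    (Γ : Matrix (Fin s) (Fin s) ℝ) (hΓsymm : Γ.IsSymm) (hΓpos : Γ.PosDef)
    (φ : ℝ → Matrix (Fin n) (Fin s) ℝ) (hφ : Continuous φ)
    (e : ℝ → Fin n → ℝ) (ψ : ℝ → Fin s → ℝ)
    (he : ∀ t, HasDerivAt e (Ac.mulVec (e t) + (φ t).mulVec (ψ t)) t)
    (hψ : ∀ t, HasDerivAt ψ (-(Γ⁻¹.mulVec ((φ t)ᵀ.mulVec (P.mulVec (e t))))) t) :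
    ∃ K > (0 : ℝ), ∀ t : ℝ, 0 ≤ t → ‖e t‖ ≤ K ∧ ‖ψ t‖ ≤ K := by
  obtain ⟨cP, hcP, hPlow⟩ := posdef_lower hn P hPpos
  obtain ⟨cΓ, hcΓ, hΓlow⟩ := posdef_lower hs Γ hΓpos
  have hΓdet : IsUnit Γ.det := isUnit_iff_ne_zero.mpr hΓpos.det_pos.ne'
  set V : ℝ → ℝ := fun t => e t ⬝ᵥ P.mulVec (e t) + ψ t ⬝ᵥ Γ.mulVec (ψ t) with hVdef
  have hVderiv : ∀ t, HasDerivAt V (-2 * (e t ⬝ᵥ Q.mulVec (e t))) t := by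
    intro t
    have h := (hasDerivAt_quad P (he t)).add (hasDerivAt_quad Γ (hψ t))
    rw [lyap_deriv_eq Ac P Q hPsymm hLyap Γ hΓsymm hΓdet (φ t) (e t) (ψ t)] at h
    exact h
  have hQnn : ∀ t, 0 ≤ e t ⬝ᵥ Q.mulVec (e t) := fun t => by simpa using hQpos.dotProduct_mulVec_nonneg (e t)
  have hVcont : Continuous V := by
    have : Differentiable ℝ V := fun t => (hVderiv t).differentiableAt
    exact this.continuous
  have hanti : AntitoneOn V (Set.Ici (0:ℝ)) := by
    apply antitoneOn_of_deriv_nonpos (convex_Ici 0) hVcont.continuousOn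
    · intro x _
      exact (hVderiv x).differentiableAt.differentiableWithinAt
    · intro x _
      rw [(hVderiv x).deriv]
      have := hQnn x
      linarith
  have hVle : ∀ t, 0 ≤ t → V t ≤ V 0 := fun t ht =>
    hanti Set.self_mem_Ici ht ht
  have hPnn : ∀ t, 0 ≤ e t ⬝ᵥ P.mulVec (e t) := fun t => by
    simpa using hPpos.posSemidef.dotProduct_mulVec_nonneg (e t)
  have hΓnn : ∀ t, 0 ≤ ψ t ⬝ᵥ Γ.mulVec (ψ t) := fun t => by
    simpa using hΓpos.posSemidef.dotProduct_mulVec_nonneg (ψ t)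
  set c := min cP cΓ with hcdef
  have hc : 0 < c := lt_min hcP hcΓ
  have hV0 : 0 ≤ V 0 := add_nonneg (hPnn 0) (hΓnn 0)
  have key : ∀ t, 0 ≤ t → c * ‖e t‖^2 ≤ V 0 ∧ c * ‖ψ t‖^2 ≤ V 0 := by
    intro t ht
    constructor
    · calc c * ‖e t‖^2 ≤ cP * ‖e t‖^2 :=
            mul_le_mul_of_nonneg_right (min_le_left _ _) (sq_nonneg _)
        _ ≤ e t ⬝ᵥ P.mulVec (e t) := hPlow (e t)
        _ ≤ V t := le_add_of_nonneg_right (hΓnn t)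
        _ ≤ V 0 := hVle t ht
    · calc c * ‖ψ t‖^2 ≤ cΓ * ‖ψ t‖^2 :=
            mul_le_mul_of_nonneg_right (min_le_right _ _) (sq_nonneg _)
        _ ≤ ψ t ⬝ᵥ Γ.mulVec (ψ t) := hΓlow (ψ t)
        _ ≤ V t := le_add_of_nonneg_left (hPnn t)
        _ ≤ V 0 := hVle t ht
  refine ⟨Real.sqrt (V 0 / c) + 1, by positivity, fun t ht => ?_⟩
  obtain ⟨h1, h2⟩ := key t ht
  have hb : ∀ x : ℝ, 0 ≤ x → c * x^2 ≤ V 0 → x ≤ Real.sqrt (V 0 / c) + 1 := by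
    intro x hx hle
    have hx2 : x^2 ≤ V 0 / c := (le_div_iff₀' hc).mpr hle
    have := (Real.le_sqrt hx (by positivity)).mpr hx2
    linarith
  exact ⟨hb _ (norm_nonneg _) h1, hb _ (norm_nonneg _) h2⟩
end

section
/- Let s and m be positive integers, let Q₁ be a symmetric positive definite s×s real matrix and Q₂ a symmetric positive definite m×m real matrix, and let B₁ be an arbitrary s×s real matrix and B₂, B₃ arbitrary s×m real matrices. Then there exist γ₁ > 0 and γ₂ > 0 such that the symmetric (2s+m)×(2s+m) block matrix Q_c = [[Q₁, B₁, B₂], [B₁ᵀ, γ₁·Q₁, γ₁·B₃], [B₂ᵀ, γ₁·B₃ᵀ, γ₂·Q₂]] is positive definite. -/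
open Matrix

set_option linter.unusedSectionVars false

variable {ι κ : Type*} [Fintype ι] [Fintype κ] [DecidableEq ι] [DecidableEq κ]

lemma quad_cont (M : Matrix ι ι ℝ) : Continuous (fun x : ι → ℝ => x ⬝ᵥ M *ᵥ x) := by
  unfold dotProduct mulVec dotProduct
  fun_prop

lemma exists_smul_sub_posDef (Q K : Matrix ι ι ℝ) (hQ : Q.PosDef) (hK : K.IsHermitian) :
    ∃ t > (0:ℝ), (t • Q - K).PosDef := by
  have herm : ∀ t : ℝ, (t • Q - K).IsHermitian := by
    intro t
    unfold Matrix.IsHermitian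
    simp [conjTranspose_sub, conjTranspose_smul,
      ← conjTranspose_eq_transpose_of_trivial, hQ.1.eq, hK.eq]
  cases isEmpty_or_nonempty ι with
  | inl h =>
    exact ⟨1, one_pos, .of_dotProduct_mulVec_pos (herm 1) fun x hx => absurd (funext fun i => (h.elim i)) hx⟩
  | inr h =>
    -- work on the Euclidean sphere
    set e := WithLp.equiv 2 (ι → ℝ) with he
    set S : Set (EuclideanSpace ℝ ι) := Metric.sphere 0 1 with hS
    have hScomp : IsCompact S := isCompact_sphere 0 1
    have hSne : S.Nonempty := NormedSpace.sphere_nonempty.mpr zero_le_one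
    have contf : Continuous fun y : EuclideanSpace ℝ ι => (e y) ⬝ᵥ Q *ᵥ (e y) :=
      (quad_cont Q).comp (PiLp.continuous_ofLp (p := 2) _)
    have contg : Continuous fun y : EuclideanSpace ℝ ι => (e y) ⬝ᵥ K *ᵥ (e y) :=
      (quad_cont K).comp (PiLp.continuous_ofLp (p := 2) _)
    obtain ⟨ya, hyaS, hmin⟩ := hScomp.exists_isMinOn hSne contf.continuousOn
    obtain ⟨yb, hybS, hmax⟩ := hScomp.exists_isMaxOn hSne contg.continuousOn
    set a : ℝ := (e ya) ⬝ᵥ Q *ᵥ (e ya) with ha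
    set b : ℝ := (e yb) ⬝ᵥ K *ᵥ (e yb) with hb
    have hya0 : (e ya) ≠ 0 := by
      intro h0
      have : ya ≠ 0 := by
        have := mem_sphere_zero_iff_norm.mp hyaS
        intro hz; rw [hz] at this; simp at this
      exact this (by ext i; exact congrFun h0 i)
    have hapos : 0 < a := by
      have := hQ.dotProduct_mulVec_pos hya0; rwa [star_trivial] at this
    refine ⟨(|b| + 1) / a, by positivity, .of_dotProduct_mulVec_pos (herm _) fun x hx => ?_⟩
    set y : EuclideanSpace ℝ ι := e.symm x with hy
    have hyne : y ≠ 0 := by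
      intro h0; apply hx
      have := congrArg e h0
      rw [hy, Equiv.apply_symm_apply] at this
      simpa [he] using this
    have hnpos : 0 < ‖y‖ := norm_pos_iff.mpr hyne
    set u : EuclideanSpace ℝ ι := ‖y‖⁻¹ • y with hu
    have huS : u ∈ S := by
      rw [hS, mem_sphere_zero_iff_norm, hu, norm_smul]
      simp [abs_of_pos (inv_pos.mpr hnpos), inv_mul_cancel₀ hnpos.ne']
    have hfu : a ≤ (e u) ⬝ᵥ Q *ᵥ (e u) := hmin huS
    have hgu : (e u) ⬝ᵥ K *ᵥ (e u) ≤ b := hmax huS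
    have hxu : x = ‖y‖ • (e u) := by
      rw [hu]
      have h1 : e (‖y‖⁻¹ • y) = ‖y‖⁻¹ • (e y) := rfl
      rw [h1, smul_smul, mul_inv_cancel₀ hnpos.ne', one_smul]
      simp [hy]
    have expand : ∀ M : Matrix ι ι ℝ, x ⬝ᵥ M *ᵥ x = ‖y‖^2 * ((e u) ⬝ᵥ M *ᵥ (e u)) := by
      intro M
      rw [hxu, smul_dotProduct, mulVec_smul, dotProduct_smul, smul_eq_mul, smul_eq_mul]
      ring
    have key : 0 < (|b| + 1) / a * ((e u) ⬝ᵥ Q *ᵥ (e u)) - (e u) ⬝ᵥ K *ᵥ (e u) := by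
      have h1 : (|b| + 1) / a * a ≤ (|b| + 1) / a * ((e u) ⬝ᵥ Q *ᵥ (e u)) := by
        apply mul_le_mul_of_nonneg_left hfu (by positivity)
      have h2 : (|b| + 1) / a * a = |b| + 1 := div_mul_cancel₀ _ hapos.ne'
      nlinarith [le_abs_self b]
    have : star x ⬝ᵥ ((((|b| + 1) / a) • Q - K) *ᵥ x) =
        ‖y‖^2 * ((|b| + 1) / a * ((e u) ⬝ᵥ Q *ᵥ (e u)) - (e u) ⬝ᵥ K *ᵥ (e u)) := by
      rw [star_trivial, sub_mulVec, dotProduct_sub, smul_mulVec, dotProduct_smul,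
        expand Q, expand K, smul_eq_mul]
      ring
    rw [this]
    positivity

lemma fromBlocks_posDef_of_schur (A : Matrix ι ι ℝ) (B : Matrix ι κ ℝ) (D : Matrix κ κ ℝ)
    (hA : A.PosDef) (hS : (D - Bᵀ * A⁻¹ * B).PosDef) :
    (fromBlocks A B Bᵀ D).PosDef := by
  haveI := hA.isUnit.invertible
  have hBH : Bᴴ = Bᵀ := conjTranspose_eq_transpose_of_trivial B
  have hherm : (fromBlocks A B Bᵀ D).IsHermitian := by
    rw [← hBH]
    exact Matrix.IsHermitian.fromBlocks₁₁ B D hA.1 |>.mpr hS.1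
  refine .of_dotProduct_mulVec_pos hherm fun z hz => ?_
  set x : ι → ℝ := z ∘ Sum.inl with hx
  set y : κ → ℝ := z ∘ Sum.inr with hyy
  have hz' : z = Sum.elim x y := (Sum.elim_comp_inl_inr z).symm
  have hsc := schur_complement_eq₁₁ (A := A) B D x y hA.1
  rw [hBH] at hsc
  simp only [star_trivial] at hsc
  rw [hz', dotProduct_mulVec, star_trivial, hsc]
  rcases eq_or_ne y 0 with hy0 | hy0
  · have hx0 : x ≠ 0 := by
      intro h0; apply hz; rw [hz', h0, hy0]; ext (i|i) <;> rfl
    have t2 : y ᵥ* (D - Bᵀ * A⁻¹ * B) ⬝ᵥ y = 0 := by rw [hy0]; simp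
    have t1 : 0 < (x + (A⁻¹ * B) *ᵥ y) ᵥ* A ⬝ᵥ (x + (A⁻¹ * B) *ᵥ y) := by
      have : x + (A⁻¹ * B) *ᵥ y = x := by rw [hy0]; simp
      rw [this, ← dotProduct_mulVec]
      have := hA.dotProduct_mulVec_pos hx0; rwa [star_trivial] at this
    linarith
  · have t2 : 0 < y ᵥ* (D - Bᵀ * A⁻¹ * B) ⬝ᵥ y := by
      rw [← dotProduct_mulVec]; have := hS.dotProduct_mulVec_pos hy0; rwa [star_trivial] at this
    have t1 : 0 ≤ (x + (A⁻¹ * B) *ᵥ y) ᵥ* A ⬝ᵥ (x + (A⁻¹ * B) *ᵥ y) := by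
      rw [← dotProduct_mulVec]; have := hA.posSemidef.dotProduct_mulVec_nonneg (x + (A⁻¹ * B) *ᵥ y); rwa [star_trivial] at this
    linarith

lemma exists_fromBlocks_posDef (A : Matrix ι ι ℝ) (B : Matrix ι κ ℝ) (Q : Matrix κ κ ℝ)
    (hA : A.PosDef) (hQ : Q.PosDef) :
    ∃ t > (0:ℝ), (fromBlocks A B Bᵀ (t • Q)).PosDef := by
  haveI := hA.isUnit.invertible
  have hK : (Bᵀ * A⁻¹ * B).IsHermitian := by
    rw [← conjTranspose_eq_transpose_of_trivial B]
    exact isHermitian_conjTranspose_mul_mul B hA.1.inv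
  obtain ⟨t, ht, hPD⟩ := exists_smul_sub_posDef Q (Bᵀ * A⁻¹ * B) hQ hK
  exact ⟨t, ht, fromBlocks_posDef_of_schur A B _ hA hPD⟩

/-- **Positive definiteness of the paper's block matrix `Q_c`.** For symmetric positive
definite `Q₁`, `Q₂` and arbitrary blocks `B₁`, `B₂`, `B₃`, there exist `γ₁, γ₂ > 0`
such that the symmetric block matrix
`[[Q₁, B₁, B₂], [B₁ᵀ, γ₁·Q₁, γ₁·B₃], [B₂ᵀ, γ₁·B₃ᵀ, γ₂·Q₂]]` is positive definite. -/
theorem blockMatrix_posDef_of_large_gamma (s m : ℕ) (hs : 0 < s) (hm : 0 < m)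
    (Q₁ : Matrix (Fin s) (Fin s) ℝ) (hQ₁symm : Q₁.IsSymm) (hQ₁ : Q₁.PosDef)
    (Q₂ : Matrix (Fin m) (Fin m) ℝ) (hQ₂symm : Q₂.IsSymm) (hQ₂ : Q₂.PosDef)
    (B₁ : Matrix (Fin s) (Fin s) ℝ) (B₂ B₃ : Matrix (Fin s) (Fin m) ℝ) :
    ∃ γ₁ > (0 : ℝ), ∃ γ₂ > (0 : ℝ),
      (Matrix.fromBlocks
        (Matrix.fromBlocks Q₁ B₁ B₁ᵀ (γ₁ • Q₁))
        (Matrix.fromRows B₂ (γ₁ • B₃))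
        (Matrix.fromCols B₂ᵀ (γ₁ • B₃ᵀ))
        (γ₂ • Q₂)).PosDef := by
  obtain ⟨γ₁, hγ₁, hA⟩ := exists_fromBlocks_posDef Q₁ B₁ Q₁ hQ₁ hQ₁
  obtain ⟨γ₂, hγ₂, hfull⟩ := exists_fromBlocks_posDef
    (fromBlocks Q₁ B₁ B₁ᵀ (γ₁ • Q₁)) (fromRows B₂ (γ₁ • B₃)) Q₂ hA hQ₂
  refine ⟨γ₁, hγ₁, γ₂, hγ₂, ?_⟩
  have ht : (fromRows B₂ (γ₁ • B₃))ᵀ = fromCols B₂ᵀ (γ₁ • B₃ᵀ) := by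
    rw [transpose_fromRows, transpose_smul]
  rwa [ht] at hfull
end

section
/- Let η : ℝ → ℝ^s be a continuous, bounded, persistently excited function, and let e : ℝ → ℝ^s be continuous with e(t) → 0 as t → ∞. Then ξ := η − e is eventually persistently excited: there exist T₁ ≥ 0, T₀ > 0 and α > 0 such that for every t₀ ≥ T₁, the matrix ∫_{t₀}^{t₀+T₀} ξ(τ)·ξ(τ)ᵀ dτ − α·I is positive semidefinite. -/
open Matrix MeasureTheory

/-- A (locally integrable) function `w : ℝ → ℝ^s` is persistently excited if there are
`T₀ > 0` and `α > 0` such that for every `t₀ ≥ 0` the matrix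
`∫_{t₀}^{t₀+T₀} w(τ)·w(τ)ᵀ dτ − α·I` is positive semidefinite. -/
def PersistentlyExcited {s : ℕ} (w : ℝ → Fin s → ℝ) : Prop :=
  ∃ T₀ > (0 : ℝ), ∃ α > (0 : ℝ), ∀ t₀ : ℝ, 0 ≤ t₀ →
    ((Matrix.of fun i j => ∫ τ in t₀..(t₀ + T₀), w τ i * w τ j) -
      α • (1 : Matrix (Fin s) (Fin s) ℝ)).PosSemidef

lemma quad_form_eq {s : ℕ} (w : ℝ → Fin s → ℝ) (hw : Continuous w) (a b : ℝ) (x : Fin s → ℝ) :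
    dotProduct x ((Matrix.of fun i j => ∫ τ in a..b, w τ i * w τ j) *ᵥ x)
      = ∫ τ in a..b, (∑ i, w τ i * x i) ^ 2 := by
  have hcont : ∀ i j : Fin s, Continuous fun τ => x i * (w τ i * w τ j * x j) := by
    intro i j
    exact (continuous_const.mul ((((continuous_apply i).comp hw).mul
      ((continuous_apply j).comp hw)).mul continuous_const))
  have hexp : ∀ τ : ℝ, (∑ i, w τ i * x i) ^ 2
      = ∑ i, ∑ j, x i * (w τ i * w τ j * x j) := by
    intro τ
    rw [sq, Finset.sum_mul_sum]
    refine Finset.sum_congr rfl fun i _ => Finset.sum_congr rfl fun j _ => by ring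
  simp only [hexp]
  rw [intervalIntegral.integral_finset_sum]
  · refine Finset.sum_congr rfl fun i _ => ?_
    rw [intervalIntegral.integral_finset_sum]
    · simp only [dotProduct, Matrix.mulVec, Matrix.of_apply, Finset.mul_sum]
      refine Finset.sum_congr rfl fun j _ => ?_
      rw [intervalIntegral.integral_const_mul, intervalIntegral.integral_mul_const]
    · intro j _
      exact (hcont i j).intervalIntegrable a b
  · intro i _
    exact (continuous_finset_sum _ fun j _ => hcont i j).intervalIntegrable a b

lemma herm_aux {s : ℕ} (w : ℝ → Fin s → ℝ) (a b c : ℝ) :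
    (((Matrix.of fun i j => ∫ τ in a..b, w τ i * w τ j)) -
      c • (1 : Matrix (Fin s) (Fin s) ℝ)).IsHermitian := by
  apply Matrix.IsHermitian.sub
  · show _ = _
    ext i j
    simp only [Matrix.conjTranspose_apply, Matrix.of_apply, star_trivial]
    congr 1
    ext τ
    ring
  · show _ = _
    ext i j
    simp only [Matrix.conjTranspose_apply, Matrix.smul_apply, Matrix.one_apply, star_trivial,
      smul_eq_mul]
    by_cases h : i = j <;> simp [h, eq_comm]

/-- **Persistent excitation is inherited by `ξ := η − e` when `e → 0`.** If `η` is a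
continuous, bounded, persistently excited function and `e` is continuous with
`e(t) → 0`, then `ξ = η − e` is eventually persistently excited. -/
theorem persistentlyExcited_sub_vanishing (s : ℕ) (hs : 0 < s)
    (η e : ℝ → Fin s → ℝ)
    (hηcont : Continuous η) (hηbdd : ∃ B : ℝ, ∀ t : ℝ, ‖η t‖ ≤ B)
    (hPE : PersistentlyExcited η)
    (hecont : Continuous e) (he0 : Filter.Tendsto e Filter.atTop (nhds 0)) :
    ∃ T₁ : ℝ, 0 ≤ T₁ ∧ ∃ T₀ > (0 : ℝ), ∃ α > (0 : ℝ), ∀ t₀ : ℝ, T₁ ≤ t₀ →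
      ((Matrix.of fun i j =>
          ∫ τ in t₀..(t₀ + T₀), (η τ - e τ) i * (η τ - e τ) j) -
        α • (1 : Matrix (Fin s) (Fin s) ℝ)).PosSemidef := by
  obtain ⟨T₀, hT₀, α, hα, hpe⟩ := hPE
  set ε : ℝ := Real.sqrt (α / (4 * s * T₀)) with hεdef
  have hεpos : 0 < ε := Real.sqrt_pos.mpr (by positivity)
  have hε2 : (s : ℝ) * ε ^ 2 * T₀ = α / 4 := by
    rw [hεdef, Real.sq_sqrt (by positivity)]
    field_simp
  have hev : ∀ᶠ t in Filter.atTop, ‖e t‖ < ε := by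
    have := Metric.tendsto_nhds.mp he0 ε hεpos
    simpa [dist_zero_right] using this
  obtain ⟨N, hN⟩ := Filter.eventually_atTop.mp hev
  refine ⟨max N 0, le_max_right _ _, T₀, hT₀, α / 4, by positivity, fun t₀ ht₀ => ?_⟩
  have ht₀0 : (0 : ℝ) ≤ t₀ := le_trans (le_max_right N 0) ht₀
  have hξcont : Continuous (fun τ => η τ - e τ) := hηcont.sub hecont
  refine Matrix.PosSemidef.of_dotProduct_mulVec_nonneg (herm_aux _ _ _ _) fun x => ?_
  rw [star_trivial, Matrix.sub_mulVec, dotProduct_sub, sub_nonneg,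
    Matrix.smul_mulVec, Matrix.one_mulVec, dotProduct_smul, smul_eq_mul,
    quad_form_eq (fun τ => η τ - e τ) hξcont]
  set Q : ℝ := ∑ i, x i ^ 2 with hQdef
  have hQeq : dotProduct x x = Q := by
    simp [dotProduct, hQdef, sq]
  rw [hQeq]
  have hQ0 : 0 ≤ Q := Finset.sum_nonneg fun i _ => sq_nonneg _
  -- continuity of the relevant scalar functions
  have hacont : Continuous fun τ => ∑ i, η τ i * x i :=
    continuous_finset_sum _ fun i _ => ((continuous_apply i).comp hηcont).mul continuous_const
  have hbcont : Continuous fun τ => ∑ i, e τ i * x i :=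
    continuous_finset_sum _ fun i _ => ((continuous_apply i).comp hecont).mul continuous_const
  have hccont : Continuous fun τ => ∑ i, (η τ - e τ) i * x i :=
    continuous_finset_sum _ fun i _ => ((continuous_apply i).comp hξcont).mul continuous_const
  -- lower bound on ∫ (η·x)²
  have hηq : α * Q ≤ ∫ τ in t₀..(t₀ + T₀), (∑ i, η τ i * x i) ^ 2 := by
    have h2 := (hpe t₀ ht₀0).dotProduct_mulVec_nonneg x
    rw [star_trivial, Matrix.sub_mulVec, dotProduct_sub, sub_nonneg,
      Matrix.smul_mulVec, Matrix.one_mulVec, dotProduct_smul, smul_eq_mul,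
      quad_form_eq η hηcont, hQeq] at h2
    exact h2
  -- upper bound on ∫ (e·x)²
  have heq2 : (∫ τ in t₀..(t₀ + T₀), (∑ i, e τ i * x i) ^ 2) ≤ T₀ * ((s : ℝ) * ε ^ 2 * Q) := by
    have hmono : ∀ τ ∈ Set.Icc t₀ (t₀ + T₀),
        (∑ i, e τ i * x i) ^ 2 ≤ (s : ℝ) * ε ^ 2 * Q := by
      intro τ hτ
      have hτN : N ≤ τ := le_trans (le_trans (le_max_left N 0) ht₀) hτ.1
      have heτ : ‖e τ‖ ≤ ε := (hN τ hτN).le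
      have hsum : (∑ i, e τ i * x i) ^ 2 ≤ (∑ i, e τ i ^ 2) * Q :=
        Finset.sum_mul_sq_le_sq_mul_sq _ _ _
      have hsum2 : (∑ i, e τ i ^ 2) ≤ (s : ℝ) * ε ^ 2 := by
        calc (∑ i, e τ i ^ 2) ≤ ∑ _i : Fin s, ε ^ 2 := by
              refine Finset.sum_le_sum fun i _ => ?_
              have h1 : |e τ i| ≤ ε := le_trans (norm_le_pi_norm (e τ) i) heτ
              calc e τ i ^ 2 = |e τ i| ^ 2 := (sq_abs _).symm
                _ ≤ ε ^ 2 := by nlinarith [abs_nonneg (e τ i)]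
          _ = (s : ℝ) * ε ^ 2 := by simp [Finset.sum_const, mul_comm]
      calc (∑ i, e τ i * x i) ^ 2 ≤ (∑ i, e τ i ^ 2) * Q := hsum
        _ ≤ (s : ℝ) * ε ^ 2 * Q := by nlinarith
    calc (∫ τ in t₀..(t₀ + T₀), (∑ i, e τ i * x i) ^ 2)
        ≤ ∫ _τ in t₀..(t₀ + T₀), (s : ℝ) * ε ^ 2 * Q := by
          apply intervalIntegral.integral_mono_on (by linarith)
            ((hbcont.pow 2).intervalIntegrable _ _)
            (intervalIntegrable_const) hmono
      _ = T₀ * ((s : ℝ) * ε ^ 2 * Q) := by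
          rw [intervalIntegral.integral_const]
          simp [smul_eq_mul]
  -- pointwise (a-b)² ≥ a²/2 - b², integrated
  have hmid : (∫ τ in t₀..(t₀ + T₀), ((∑ i, η τ i * x i) ^ 2 / 2 - (∑ i, e τ i * x i) ^ 2))
      ≤ ∫ τ in t₀..(t₀ + T₀), (∑ i, (η τ - e τ) i * x i) ^ 2 := by
    apply intervalIntegral.integral_mono_on (by linarith)
      ((((hacont.pow 2).div_const 2).sub (hbcont.pow 2)).intervalIntegrable _ _)
      ((hccont.pow 2).intervalIntegrable _ _)
    intro τ _
    have hsub : (∑ i, (η τ - e τ) i * x i)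
        = (∑ i, η τ i * x i) - (∑ i, e τ i * x i) := by
      rw [← Finset.sum_sub_distrib]
      refine Finset.sum_congr rfl fun i _ => ?_
      simp [Pi.sub_apply, sub_mul]
    show (∑ i, η τ i * x i) ^ 2 / 2 - (∑ i, e τ i * x i) ^ 2 ≤ (∑ i, (η τ - e τ) i * x i) ^ 2
    rw [hsub]
    nlinarith [sq_nonneg ((∑ i, η τ i * x i) - 2 * (∑ i, e τ i * x i))]
  have hsplit : (∫ τ in t₀..(t₀ + T₀), ((∑ i, η τ i * x i) ^ 2 / 2 - (∑ i, e τ i * x i) ^ 2))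
      = (∫ τ in t₀..(t₀ + T₀), (∑ i, η τ i * x i) ^ 2) / 2
        - ∫ τ in t₀..(t₀ + T₀), (∑ i, e τ i * x i) ^ 2 := by
    rw [intervalIntegral.integral_sub (f := fun τ => (∑ i, η τ i * x i) ^ 2 / 2)
      (g := fun τ => (∑ i, e τ i * x i) ^ 2) (((hacont.pow 2).div_const 2).intervalIntegrable _ _)
      ((hbcont.pow 2).intervalIntegrable _ _), intervalIntegral.integral_div]
  rw [hsplit] at hmid
  have hfin : T₀ * ((s : ℝ) * ε ^ 2 * Q) = α / 4 * Q := by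
    rw [← hε2]; ring
  linarith
end

section
/- Let n ≥ 1 and b_n ≠ 0 a real number. Let Ā be the n×n real shift matrix (Ā entries: Ā_{i,i+1} = 1 for 1 ≤ i ≤ n−1, all other entries 0), b̄ = b_n·e_n ∈ ℝⁿ, and let A be the (n+1)×(n+1) real shift matrix (A_{i,i+1} = 1 for 1 ≤ i ≤ n, all other entries 0), b = b_n·e_n ∈ ℝ^{n+1}, c = e₁ᵀ the first-coordinate row vector. Let k̄ ∈ ℝⁿ and set k := (k̄, 1) ∈ ℝ^{n+1}, and let l ∈ ℝ^{n+1}. Assume Ā − b̄·k̄ᵀ and A − l·c are both Hurwitz. Suppose x̄ : ℝ → ℝⁿ and v : ℝ → ℝ^{n+1} are differentiable and satisfy, with u(t) := −kᵀ·v(t): x̄'(t) = Ā·x̄(t) + b̄·u(t) and v'(t) = A·v(t) + b·u(t) + l·(x̄₁(t) − v₁(t)) for all t ≥ 0. Then x̄(t) → 0 and v(t) → 0 as t → ∞. -/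
open Matrix NormedSpace Filter

/-- A real square matrix is Hurwitz if every eigenvalue of the matrix, regarded as a
matrix over `ℂ`, has strictly negative real part. -/
def IsHurwitz {n : Type*} [Fintype n] [DecidableEq n] (M : Matrix n n ℝ) : Prop :=
  ∀ μ ∈ spectrum ℂ (M.map (algebraMap ℝ ℂ)), μ.re < 0

/-- The `n × n` shift matrix: ones on the superdiagonal, zeros elsewhere. -/
def shiftMatrix (n : ℕ) : Matrix (Fin n) (Fin n) ℝ :=
  Matrix.of fun i j => if (i : ℕ) + 1 = (j : ℕ) then 1 else 0

set_option linter.unusedSectionVars false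

open Matrix NormedSpace Filter

attribute [local instance]
  Matrix.linftyOpNormedAddCommGroup Matrix.linftyOpNormedRing Matrix.linftyOpNormedAlgebra

section Helpers

variable {ι : Type*} [Fintype ι] [DecidableEq ι]

/-- `mulVec` by a fixed matrix, as a real continuous linear map on vectors. -/
noncomputable def mvCLM (M : Matrix ι ι ℂ) : (ι → ℂ) →L[ℝ] (ι → ℂ) :=
  LinearMap.toContinuousLinearMap
    { toFun := fun w => M.mulVec w
      map_add' := fun a b => Matrix.mulVec_add M a b
      map_smul' := fun c a => Matrix.mulVec_smul M c a }

@[simp] lemma mvCLM_apply (M : Matrix ι ι ℂ) (w : ι → ℂ) : mvCLM M w = M.mulVec w := rfl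

/-- `mulVec`, as a real continuous linear map in the matrix argument. -/
noncomputable def mvCLM₂ : Matrix ι ι ℂ →L[ℝ] ((ι → ℂ) →L[ℝ] (ι → ℂ)) :=
  LinearMap.toContinuousLinearMap
    { toFun := mvCLM
      map_add' := fun A B => by ext w i; simp [Matrix.add_mulVec]
      map_smul' := fun c A => by ext w i; simp [Matrix.smul_mulVec] }

@[simp] lemma mvCLM₂_apply (M : Matrix ι ι ℂ) (w : ι → ℂ) : mvCLM₂ M w = M.mulVec w := rfl

/-- `mulVec` at a fixed vector, as a complex continuous linear map in the matrix. -/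
noncomputable def mvAtCLM (w : ι → ℂ) : Matrix ι ι ℂ →L[ℂ] (ι → ℂ) :=
  LinearMap.toContinuousLinearMap
    { toFun := fun M => M.mulVec w
      map_add' := fun A B => Matrix.add_mulVec A B w
      map_smul' := fun c A => Matrix.smul_mulVec c A w }

@[simp] lemma mvAtCLM_apply (M : Matrix ι ι ℂ) (w : ι → ℂ) : mvAtCLM w M = M.mulVec w := rfl

lemma real_smul_matrix (t : ℝ) (N : Matrix ι ι ℂ) : t • N = (t : ℂ) • N := by
  ext i j; simp [Complex.real_smul]

/-- Scalar decay: `e^{tμ} p(t) → 0` when `Re μ < 0`. -/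
lemma scalar_decay {μ : ℂ} (hμ : μ.re < 0) (n : ℕ) :
    Tendsto (fun t : ℝ => Complex.exp (t * μ) * ((t : ℂ) ^ n * (Nat.factorial n : ℂ)⁻¹))
      atTop (nhds 0) := by
  rw [tendsto_zero_iff_norm_tendsto_zero]
  set c : ℝ := -μ.re with hc
  have hcpos : 0 < c := by simp [hc]; linarith
  have h1 : Tendsto (fun t : ℝ => (c * t) ^ n * Real.exp (-(c * t))) atTop (nhds 0) :=
    (Real.tendsto_pow_mul_exp_neg_atTop_nhds_zero n).comp
      (Filter.Tendsto.const_mul_atTop hcpos tendsto_id)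
  have h2 : Tendsto (fun t : ℝ => ((c⁻¹) ^ n * (Nat.factorial n : ℝ)⁻¹) *
      ((c * t) ^ n * Real.exp (-(c * t)))) atTop (nhds 0) := by
    simpa using h1.const_mul ((c⁻¹) ^ n * (Nat.factorial n : ℝ)⁻¹)
  refine h2.congr' ?_
  filter_upwards [eventually_ge_atTop (0 : ℝ)] with t ht
  have : ‖Complex.exp (↑t * μ) * ((t : ℂ) ^ n * (Nat.factorial n : ℂ)⁻¹)‖
      = Real.exp (t * μ.re) * (t ^ n * (Nat.factorial n : ℝ)⁻¹) := by
    rw [norm_mul, norm_mul, Complex.norm_exp]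
    simp [abs_of_nonneg ht, Complex.norm_natCast]
  rw [this]
  have hcne : c ≠ 0 := ne_of_gt hcpos
  have hexp : Real.exp (-(c * t)) = Real.exp (t * μ.re) := by rw [hc]; ring_nf
  rw [mul_pow, hexp]
  field_simp
  ring_nf
  rw [← mul_pow, mul_inv_cancel₀ hcne, one_pow, one_mul]

end Helpers

section Decay

variable {ι : Type*} [Fintype ι] [DecidableEq ι]

lemma exp_mulVec_eq_sum {N : Matrix ι ι ℂ} {μ : ℂ} {w : ι → ℂ} {k : ℕ}
    (hBk : ((N - μ • 1) ^ k).mulVec w = 0) (t : ℝ) :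
    (exp ((t : ℂ) • N)).mulVec w =
      ∑ n ∈ Finset.range k,
        (Complex.exp (t * μ) * ((t : ℂ) ^ n * (Nat.factorial n : ℂ)⁻¹)) •
          ((N - μ • 1) ^ n).mulVec w := by
  set B : Matrix ι ι ℂ := N - μ • 1 with hB
  have hsplit : (t : ℂ) • N = ((t : ℂ) * μ) • (1 : Matrix ι ι ℂ) + (t : ℂ) • B := by
    rw [hB]; rw [smul_sub, smul_smul]; abel
  have hcomm : Commute (((t : ℂ) * μ) • (1 : Matrix ι ι ℂ)) ((t : ℂ) • B) :=
    ((Commute.one_left B).smul_left _).smul_right _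
  have hexp1 : exp (((t : ℂ) * μ) • (1 : Matrix ι ι ℂ))
      = Complex.exp ((t : ℂ) * μ) • (1 : Matrix ι ι ℂ) := by
    rw [← Algebra.algebraMap_eq_smul_one]
    refine (algebraMap_exp_comm (𝕂 := ℂ) (𝔸 := Matrix ι ι ℂ) ((t : ℂ) * μ)).symm.trans ?_
    rw [← Complex.exp_eq_exp_ℂ, Algebra.algebraMap_eq_smul_one]
  have hexp2 : (exp ((t : ℂ) • B)).mulVec w =
      ∑ n ∈ Finset.range k, ((t : ℂ) ^ n * (Nat.factorial n : ℂ)⁻¹) • (B ^ n).mulVec w := by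
    have hsummable := expSeries_summable' (𝕂 := ℂ) ((t : ℂ) • B)
    have hmap : (exp ((t : ℂ) • B)).mulVec w
        = ∑' n : ℕ, ((Nat.factorial n : ℂ)⁻¹ • ((t : ℂ) • B) ^ n).mulVec w := by
      rw [exp_eq_tsum ℂ]
      exact ((mvAtCLM w).hasSum hsummable.hasSum).tsum_eq.symm
    rw [hmap]
    rw [tsum_eq_sum (s := Finset.range k) ?_]
    · refine Finset.sum_congr rfl fun n _ => ?_
      rw [smul_pow, smul_smul, Matrix.smul_mulVec, mul_comm]
    · intro n hn
      have hkn : k ≤ n := by simpa using Finset.mem_range.not.mp hn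
      have hz : (B ^ n).mulVec w = 0 := by
        have hpow : B ^ n = B ^ (n - k) * B ^ k := by
          rw [← pow_add]; congr 1; omega
        rw [hpow, ← Matrix.mulVec_mulVec, hBk, Matrix.mulVec_zero]
      rw [smul_pow, smul_smul, Matrix.smul_mulVec, hz, smul_zero]
  rw [hsplit, Matrix.exp_add_of_commute _ _ hcomm, hexp1, smul_mul_assoc, one_mul,
    Matrix.smul_mulVec, hexp2, Finset.smul_sum]
  refine Finset.sum_congr rfl fun n _ => ?_
  rw [smul_smul]

end Decay
section Decay2

variable {ι : Type*} [Fintype ι] [DecidableEq ι]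

lemma decay (N : Matrix ι ι ℂ) (hN : ∀ μ ∈ spectrum ℂ N, μ.re < 0) (w : ι → ℂ) :
    Tendsto (fun t : ℝ => (exp ((t : ℂ) • N)).mulVec w) atTop (nhds 0) := by
  set f : Module.End ℂ (ι → ℂ) := Matrix.toLinAlgEquiv' N with hf
  have hspec : spectrum ℂ f = spectrum ℂ N := AlgEquiv.spectrum_eq _ _
  set S : Submodule ℂ (ι → ℂ) :=
    { carrier := {w | Tendsto (fun t : ℝ => (exp ((t : ℂ) • N)).mulVec w) atTop (nhds 0)}
      add_mem' := fun {a b} ha hb => by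
        simpa [Matrix.mulVec_add] using Filter.Tendsto.add ha hb
      zero_mem' := by simpa [Matrix.mulVec_zero] using tendsto_const_nhds
      smul_mem' := fun c a ha => by
        simpa [Matrix.mulVec_smul] using Filter.Tendsto.const_smul ha c } with hS
  suffices hw : w ∈ S from hw
  have htop := Module.End.iSup_maxGenEigenspace_eq_top f
  have hsup : (⨆ μ : ℂ, f.maxGenEigenspace μ) ≤ S := by
    refine iSup_le fun μ => fun w hw => ?_
    obtain ⟨k, hk⟩ := (Module.End.mem_maxGenEigenspace f μ w).mp hw
    by_cases hw0 : w = 0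
    · simpa [hw0] using S.zero_mem
    have hmem : w ∈ f.genEigenspace μ k := Module.End.mem_genEigenspace_nat.mpr hk
    have hgen : f.HasGenEigenvalue μ k :=
      (Submodule.ne_bot_iff _).mpr ⟨w, hmem, hw0⟩
    have heig : f.HasEigenvalue μ := Module.End.hasEigenvalue_of_hasGenEigenvalue hgen
    have hμre : μ.re < 0 := hN μ (hspec ▸ heig.mem_spectrum)
    have hBk : ((N - μ • 1) ^ k).mulVec w = 0 := by
      have htrans : Matrix.toLinAlgEquiv' ((N - μ • 1) ^ k) = (f - μ • 1) ^ k := by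
        rw [map_pow, map_sub, _root_.map_smul, _root_.map_one]
      have h2 := congrArg (fun (g : Module.End ℂ (ι → ℂ)) => g w) htrans
      simp only [Matrix.toLinAlgEquiv'_apply, hk] at h2
      exact h2
    show Tendsto _ atTop (nhds 0)
    have hform := fun t : ℝ => exp_mulVec_eq_sum hBk t
    refine Tendsto.congr (fun t => (hform t).symm) ?_
    have h0 : (0 : ι → ℂ) = ∑ n ∈ Finset.range k, (0 : ι → ℂ) := by simp
    rw [h0]
    refine tendsto_finset_sum _ fun n _ => ?_
    have := (scalar_decay hμre n).smul_const (((N - μ • 1) ^ n).mulVec w)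
    simpa using this
  exact hsup (htop ▸ Submodule.mem_top)

end Decay2
section Rep

variable {ι : Type*} [Fintype ι] [DecidableEq ι]

lemma ode_rep {N : Matrix ι ι ℂ} {x : ℝ → ι → ℂ}
    (hx : ∀ t : ℝ, 0 ≤ t → HasDerivAt x (N.mulVec (x t)) t) {t : ℝ} (ht : 0 ≤ t) :
    x t = (exp (t • N)).mulVec (x 0) := by
  set E : ℝ → Matrix ι ι ℂ := fun s => exp (s • (-N)) with hE
  have hEd : ∀ s : ℝ, HasDerivAt E (E s * (-N)) s := fun s =>
    hasDerivAt_exp_smul_const (-N) s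
  set y : ℝ → ι → ℂ := fun s => (E s).mulVec (x s) with hy
  have hyd : ∀ s : ℝ, 0 ≤ s → HasDerivAt y 0 s := by
    intro s hs
    have hc : HasDerivAt (fun s' => mvCLM₂ (E s')) (mvCLM₂ (E s * (-N))) s := by
      exact mvCLM₂.hasFDerivAt.comp_hasDerivAt s (hEd s)
    have hder := hc.clm_apply (hx s hs)
    have h0 : mvCLM₂ (E s * -N) (x s) + mvCLM₂ (E s) (N.mulVec (x s)) = 0 := by
      simp only [mvCLM₂_apply]
      rw [Matrix.mulVec_mulVec, mul_neg, Matrix.neg_mulVec, neg_add_cancel]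
    exact h0 ▸ hder
  have hconst : y t = y 0 :=
    constant_of_has_deriv_right_zero
      (fun s hs => ((hyd s hs.1).continuousAt).continuousWithinAt)
      (fun s hs => (hyd s hs.1).hasDerivWithinAt) t (Set.right_mem_Icc.mpr ht)
  have hy0 : y 0 = x 0 := by
    simp [hy, hE, Matrix.one_mulVec]
  have hcomm : Commute (t • N) (t • (-N)) :=
    (((Commute.refl N).neg_right).smul_left t).smul_right t
  have hinv : exp (t • N) * E t = 1 := by
    rw [hE, ← Matrix.exp_add_of_commute _ _ hcomm]
    simp
  calc x t = (1 : Matrix ι ι ℂ).mulVec (x t) := (Matrix.one_mulVec _).symm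
    _ = (exp (t • N) * E t).mulVec (x t) := by rw [hinv]
    _ = (exp (t • N)).mulVec (y t) := by rw [← Matrix.mulVec_mulVec]
    _ = (exp (t • N)).mulVec (x 0) := by rw [hconst, hy0]

lemma real_decay {M : Matrix ι ι ℝ} (hM : IsHurwitz M) {x : ℝ → ι → ℝ}
    (hx : ∀ t : ℝ, 0 ≤ t → HasDerivAt x (M.mulVec (x t)) t) :
    Tendsto x atTop (nhds 0) := by
  set N : Matrix ι ι ℂ := M.map (algebraMap ℝ ℂ) with hN
  set φ : (ι → ℝ) →L[ℝ] (ι → ℂ) := LinearMap.toContinuousLinearMap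
    { toFun := fun u i => (u i : ℂ)
      map_add' := fun a b => by funext i; simp
      map_smul' := fun c a => by funext i; simp [Complex.real_smul] } with hφ
  set xC : ℝ → ι → ℂ := fun t => φ (x t) with hxCdef
  have hφmul : ∀ u : ι → ℝ, φ (M.mulVec u) = N.mulVec (φ u) := by
    intro u; funext i
    simp only [hφ, hN, LinearMap.coe_toContinuousLinearMap', LinearMap.coe_mk, AddHom.coe_mk,
      Matrix.mulVec, dotProduct, Matrix.map_apply]
    push_cast
    rfl
  have hxC : ∀ t : ℝ, 0 ≤ t → HasDerivAt xC (N.mulVec (xC t)) t := by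
    intro t ht
    have := φ.hasFDerivAt.comp_hasDerivAt t (hx t ht)
    rwa [hφmul] at this
  have hdec : Tendsto (fun t : ℝ => (exp ((t : ℂ) • N)).mulVec (xC 0)) atTop (nhds 0) :=
    decay N hM (xC 0)
  have hxCt : Tendsto xC atTop (nhds 0) := by
    refine hdec.congr' ?_
    filter_upwards [eventually_ge_atTop (0 : ℝ)] with t ht
    rw [ode_rep hxC ht, real_smul_matrix]
  rw [tendsto_pi_nhds]
  intro i
  have hxi : Tendsto (fun t => xC t i) atTop (nhds 0) := by
    have := tendsto_pi_nhds.mp hxCt i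
    simpa using this
  have hre := (Complex.continuous_re.tendsto 0).comp hxi
  simpa [hxCdef, hφ, Function.comp_def] using hre

end Rep
section Blocks

variable {ι κ : Type*} [Fintype ι] [DecidableEq ι] [Fintype κ] [DecidableEq κ]

lemma isHurwitz_fromBlocks {A : Matrix ι ι ℝ} {B : Matrix ι κ ℝ} {D : Matrix κ κ ℝ}
    (hA : IsHurwitz A) (hD : IsHurwitz D) : IsHurwitz (Matrix.fromBlocks A B 0 D) := by
  intro μ hμ
  by_contra hre
  have hA' : μ ∉ spectrum ℂ (A.map (algebraMap ℝ ℂ)) := fun h => hre (hA μ h)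
  have hD' : μ ∉ spectrum ℂ (D.map (algebraMap ℝ ℂ)) := fun h => hre (hD μ h)
  have hAu := spectrum.notMem_iff.mp hA'
  have hDu := spectrum.notMem_iff.mp hD'
  have hmap : (Matrix.fromBlocks A B 0 D).map (algebraMap ℝ ℂ)
      = Matrix.fromBlocks (A.map (algebraMap ℝ ℂ)) (B.map (algebraMap ℝ ℂ)) 0
          (D.map (algebraMap ℝ ℂ)) := by
    rw [Matrix.fromBlocks_map, Matrix.map_zero _ (map_zero _)]
  have key : algebraMap ℂ (Matrix (ι ⊕ κ) (ι ⊕ κ) ℂ) μ -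
        Matrix.fromBlocks (A.map (algebraMap ℝ ℂ)) (B.map (algebraMap ℝ ℂ)) 0
          (D.map (algebraMap ℝ ℂ))
      = Matrix.fromBlocks
          (algebraMap ℂ (Matrix ι ι ℂ) μ - A.map (algebraMap ℝ ℂ))
          (-(B.map (algebraMap ℝ ℂ))) 0
          (algebraMap ℂ (Matrix κ κ ℂ) μ - D.map (algebraMap ℝ ℂ)) := by
    ext i j
    rcases i with i | i <;> rcases j with j | j <;>
      simp [Matrix.algebraMap_matrix_apply, Sum.inl.injEq, Sum.inr.injEq]
  have hdet : IsUnit (algebraMap ℂ (Matrix (ι ⊕ κ) (ι ⊕ κ) ℂ) μ -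
      (Matrix.fromBlocks A B 0 D).map (algebraMap ℝ ℂ)) := by
    rw [hmap, key, Matrix.isUnit_iff_isUnit_det, Matrix.det_fromBlocks_zero₂₁]
    exact ((Matrix.isUnit_iff_isUnit_det _).mp hAu).mul
      ((Matrix.isUnit_iff_isUnit_det _).mp hDu)
  exact spectrum.notMem_iff.mpr hdet hμ

end Blocks
section FinHelpers

lemma shiftMatrix_mulVec (n : ℕ) (w : Fin n → ℝ) (i : Fin n) :
    (shiftMatrix n).mulVec w i =
      if h : (i : ℕ) + 1 < n then w ⟨(i : ℕ) + 1, h⟩ else 0 := by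
  unfold shiftMatrix
  simp only [Matrix.mulVec, dotProduct, Matrix.of_apply]
  split
  · rename_i h
    rw [Finset.sum_eq_single (⟨(i : ℕ) + 1, h⟩ : Fin n)]
    · simp
    · intro j _ hj
      rw [if_neg, zero_mul]
      intro hc
      exact hj (Fin.ext hc.symm)
    · simp
  · rename_i h
    refine Finset.sum_eq_zero fun j _ => ?_
    rw [if_neg, zero_mul]
    intro hc
    exact h (hc ▸ j.isLt)

lemma snoc_dot (m : ℕ) (kbar x : Fin (m + 1) → ℝ) :
    (Fin.snoc kbar (1 : ℝ) : Fin (m + 2) → ℝ) ⬝ᵥ (Fin.snoc x (0 : ℝ)) = kbar ⬝ᵥ x := by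
  simp [dotProduct, Fin.sum_univ_castSucc]

lemma snoc_add' {m : ℕ} (a b : Fin (m + 1) → ℝ) :
    (Fin.snoc (a + b) (0 : ℝ) : Fin (m + 2) → ℝ) =
      (Fin.snoc a (0 : ℝ) : Fin (m + 2) → ℝ) + (Fin.snoc b (0 : ℝ) : Fin (m + 2) → ℝ) := by
  funext j
  refine Fin.lastCases ?_ (fun i => ?_) j <;> simp

lemma snoc_smul' {m : ℕ} (c : ℝ) (a : Fin (m + 1) → ℝ) :
    (Fin.snoc (c • a) (0 : ℝ) : Fin (m + 2) → ℝ) = c • (Fin.snoc a (0 : ℝ) : Fin (m + 2) → ℝ) := by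
  funext j
  refine Fin.lastCases ?_ (fun i => ?_) j <;> simp

lemma shift_snoc (m : ℕ) (x : Fin (m + 1) → ℝ) :
    (shiftMatrix (m + 2)).mulVec (Fin.snoc x 0) =
      (Fin.snoc ((shiftMatrix (m + 1)).mulVec x) 0 : Fin (m + 2) → ℝ) := by
  funext j
  refine Fin.lastCases ?_ (fun i => ?_) j
  · rw [Fin.snoc_last, shiftMatrix_mulVec, dif_neg]
    simp [Fin.val_last]
  · rw [Fin.snoc_castSucc, shiftMatrix_mulVec, shiftMatrix_mulVec]
    simp only [Fin.coe_castSucc]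
    by_cases h : (i : ℕ) + 1 < m + 1
    · rw [dif_pos (by omega : (i : ℕ) + 1 < m + 2), dif_pos h]
      have hcast : (⟨(i : ℕ) + 1, (by omega : (i : ℕ) + 1 < m + 2)⟩ : Fin (m + 2))
          = Fin.castSucc ⟨(i : ℕ) + 1, h⟩ := by
        ext; simp
      rw [hcast, Fin.snoc_castSucc]
    · have hi : (i : ℕ) = m := by omega
      rw [dif_pos (by omega : (i : ℕ) + 1 < m + 2), dif_neg h]
      have hlast : (⟨(i : ℕ) + 1, (by omega : (i : ℕ) + 1 < m + 2)⟩ : Fin (m + 2))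
          = Fin.last (m + 1) := by
        ext; simp [hi]
      rw [hlast, Fin.snoc_last]

lemma snoc_single (m : ℕ) (bn : ℝ) :
    (Fin.snoc (bn • (Pi.single (Fin.last m) 1 : Fin (m + 1) → ℝ)) 0 : Fin (m + 2) → ℝ)
      = bn • (Pi.single (Fin.castSucc (Fin.last m)) 1 : Fin (m + 2) → ℝ) := by
  rw [snoc_smul']
  congr 1
  funext j
  refine Fin.lastCases ?_ (fun i => ?_) j
  · rw [Fin.snoc_last, Pi.single_eq_of_ne]
    exact (Fin.castSucc_lt_last (Fin.last m)).ne'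
  · rw [Fin.snoc_castSucc]
    simp [Pi.single_apply, Fin.castSucc_inj]

lemma vecMulVec_mulVec'_s17 {ι κ : Type*} [Fintype κ] (w : ι → ℝ) (a x : κ → ℝ) :
    (Matrix.vecMulVec w a).mulVec x = (a ⬝ᵥ x) • w := by
  funext i
  simp only [Matrix.mulVec, dotProduct, Matrix.vecMulVec_apply, Pi.smul_apply,
    smul_eq_mul]
  rw [Finset.sum_mul]
  exact Finset.sum_congr rfl fun j _ => by ring

lemma hasDerivAt_snoc {m : ℕ} {x : ℝ → Fin (m + 1) → ℝ} {d : Fin (m + 1) → ℝ} {t : ℝ}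
    (h : HasDerivAt x d t) :
    HasDerivAt (fun s => (Fin.snoc (x s) 0 : Fin (m + 2) → ℝ)) (Fin.snoc d 0) t := by
  rw [hasDerivAt_pi] at h ⊢
  intro j
  refine Fin.lastCases ?_ (fun i => ?_) j
  · simp only [Fin.snoc_last]
    exact hasDerivAt_const t 0
  · simp only [Fin.snoc_castSucc]
    exact h i

end FinHelpers

/-- **BADRC closed-loop asymptotic stability (paper's Theorem, `f ≡ 0`, `ω₂ ≡ 0`).**
The plant `x̄' = Ā·x̄ + b̄·u` (integrator chain of dimension `n = m+1`, output `x̄₁`),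
the extended state observer `v' = A·v + b·u + l·(x̄₁ − v₁)` of dimension `n+1`, and the
feedback `u = −kᵀ·v` with `k = (k̄, 1)` yield `x̄(t) → 0` and `v(t) → 0` as `t → ∞`,
provided `Ā − b̄·k̄ᵀ` and `A − l·c` are Hurwitz (`c = e₁ᵀ`). -/
theorem badrc_closed_loop_stable (m : ℕ) (bn : ℝ) (hbn : bn ≠ 0)
    (kbar : Fin (m + 1) → ℝ) (l : Fin (m + 2) → ℝ)
    (hK : IsHurwitz (shiftMatrix (m + 1) -
      Matrix.vecMulVec (bn • (Pi.single (Fin.last m) 1 : Fin (m + 1) → ℝ)) kbar))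
    (hL : IsHurwitz (shiftMatrix (m + 2) -
      Matrix.vecMulVec l (Pi.single 0 1 : Fin (m + 2) → ℝ)))
    (xbar : ℝ → Fin (m + 1) → ℝ) (v : ℝ → Fin (m + 2) → ℝ)
    (hx : ∀ t : ℝ, 0 ≤ t → HasDerivAt xbar
      ((shiftMatrix (m + 1)).mulVec (xbar t) +
        (-(Fin.snoc kbar (1 : ℝ) ⬝ᵥ v t)) •
          (bn • (Pi.single (Fin.last m) 1 : Fin (m + 1) → ℝ))) t)
    (hv : ∀ t : ℝ, 0 ≤ t → HasDerivAt v
      ((shiftMatrix (m + 2)).mulVec (v t) +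
        (-(Fin.snoc kbar (1 : ℝ) ⬝ᵥ v t)) •
          (bn • (Pi.single (Fin.castSucc (Fin.last m)) 1 : Fin (m + 2) → ℝ)) +
        (xbar t 0 - v t 0) • l) t) :
    Filter.Tendsto xbar Filter.atTop (nhds 0) ∧
      Filter.Tendsto v Filter.atTop (nhds 0) := by
  classical
  set bb1 : Fin (m + 1) → ℝ := bn • (Pi.single (Fin.last m) 1 : Fin (m + 1) → ℝ) with hbb1
  set bb2 : Fin (m + 2) → ℝ := bn • (Pi.single (Fin.castSucc (Fin.last m)) 1 : Fin (m + 2) → ℝ) with hbb2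
  set kk : Fin (m + 2) → ℝ := Fin.snoc kbar 1 with hkk
  set K : Matrix (Fin (m + 1)) (Fin (m + 1)) ℝ :=
    shiftMatrix (m + 1) - Matrix.vecMulVec bb1 kbar with hKdef
  set L : Matrix (Fin (m + 2)) (Fin (m + 2)) ℝ :=
    shiftMatrix (m + 2) - Matrix.vecMulVec l (Pi.single 0 1) with hLdef
  set C : Matrix (Fin (m + 1)) (Fin (m + 2)) ℝ := Matrix.vecMulVec bb1 kk with hCdef
  set e : ℝ → Fin (m + 2) → ℝ := fun t => Fin.snoc (xbar t) 0 - v t with he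
  set Mb : Matrix (Fin (m + 1) ⊕ Fin (m + 2)) (Fin (m + 1) ⊕ Fin (m + 2)) ℝ :=
    Matrix.fromBlocks K C 0 L with hMb
  set z : ℝ → (Fin (m + 1) ⊕ Fin (m + 2)) → ℝ := fun t => Sum.elim (xbar t) (e t) with hz
  have hMbH : IsHurwitz Mb := isHurwitz_fromBlocks hK hL
  have het : ∀ t, e t = Fin.snoc (xbar t) (0 : ℝ) - v t := fun _ => rfl
  -- dot product facts
  have hkke : ∀ t, kk ⬝ᵥ e t = kbar ⬝ᵥ xbar t - kk ⬝ᵥ v t := by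
    intro t
    rw [het t, dotProduct_sub, hkk, snoc_dot]
  have he0 : ∀ t, e t 0 = xbar t 0 - v t 0 := by
    intro t
    rw [het t]
    simp only [Pi.sub_apply]
    congr 1
  -- block identities
  have hid1 : ∀ t, (shiftMatrix (m + 1)).mulVec (xbar t) + (-(kk ⬝ᵥ v t)) • bb1 =
      K.mulVec (xbar t) + C.mulVec (e t) := by
    intro t
    rw [hKdef, hCdef, Matrix.sub_mulVec, vecMulVec_mulVec'_s17, vecMulVec_mulVec'_s17, hkke t]
    module
  have hid2 : ∀ t,
      Fin.snoc ((shiftMatrix (m + 1)).mulVec (xbar t) + (-(kk ⬝ᵥ v t)) • bb1) (0 : ℝ) -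
        ((shiftMatrix (m + 2)).mulVec (v t) + (-(kk ⬝ᵥ v t)) • bb2 +
          (xbar t 0 - v t 0) • l) =
      (0 : Matrix (Fin (m + 2)) (Fin (m + 1)) ℝ).mulVec (xbar t) + L.mulVec (e t) := by
    intro t
    rw [Matrix.zero_mulVec, zero_add, hLdef, Matrix.sub_mulVec, vecMulVec_mulVec'_s17,
      single_dotProduct, one_mul, he0 t]
    have hsnoc : Fin.snoc ((shiftMatrix (m + 1)).mulVec (xbar t) + (-(kk ⬝ᵥ v t)) • bb1)
          (0 : ℝ) =
        (shiftMatrix (m + 2)).mulVec (Fin.snoc (xbar t) 0) + (-(kk ⬝ᵥ v t)) • bb2 := by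
      rw [snoc_add', snoc_smul', shift_snoc, hbb1, snoc_single, ← hbb2]
    rw [hsnoc, het t, Matrix.mulVec_sub]
    abel
  -- the combined ODE
  have hzd : ∀ t : ℝ, 0 ≤ t → HasDerivAt z (Mb.mulVec (z t)) t := by
    intro t ht
    have h1 := hx t ht
    rw [hid1 t] at h1
    have h2 := (hasDerivAt_snoc (hx t ht)).sub (hv t ht)
    rw [hid2 t] at h2
    have hmv : Mb.mulVec (z t) =
        Sum.elim (K.mulVec (xbar t) + C.mulVec (e t))
          ((0 : Matrix (Fin (m + 2)) (Fin (m + 1)) ℝ).mulVec (xbar t) + L.mulVec (e t)) := by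
      rw [hMb]
      show (Matrix.fromBlocks K C 0 L).mulVec (Sum.elim (xbar t) (e t)) = _
      rw [Matrix.fromBlocks_mulVec]
      simp [Sum.elim_comp_inl, Sum.elim_comp_inr]
    rw [hasDerivAt_pi]
    intro j
    rw [hmv]
    cases j with
    | inl i => exact hasDerivAt_pi.mp h1 i
    | inr i => exact hasDerivAt_pi.mp h2 i
  have hzt : Filter.Tendsto z Filter.atTop (nhds 0) := real_decay hMbH hzd
  have hXt : ∀ i, Filter.Tendsto (fun t => xbar t i) Filter.atTop (nhds 0) := by
    intro i
    have := tendsto_pi_nhds.mp hzt (Sum.inl i)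
    simpa [hz] using this
  have hEt : ∀ j, Filter.Tendsto (fun t => e t j) Filter.atTop (nhds 0) := by
    intro j
    have := tendsto_pi_nhds.mp hzt (Sum.inr j)
    simpa [hz] using this
  constructor
  · rw [tendsto_pi_nhds]
    intro i
    simpa using hXt i
  · rw [tendsto_pi_nhds]
    intro j
    have hveq : ∀ t, v t j = (Fin.snoc (xbar t) (0 : ℝ) : Fin (m + 2) → ℝ) j - e t j := by
      intro t; rw [het t]; simp
    refine Filter.Tendsto.congr (fun t => (hveq t).symm) ?_
    have hgoal : Filter.Tendsto (fun t => (Fin.snoc (xbar t) (0 : ℝ) : Fin (m + 2) → ℝ) j) Filter.atTop (nhds 0) := by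
      refine Fin.lastCases ?_ (fun i => ?_) j
      · simp only [Fin.snoc_last]
        exact tendsto_const_nhds
      · simp only [Fin.snoc_castSucc]
        exact hXt i
    simpa using hgoal.sub (hEt j)
end

section
/- Let n, s be positive integers. Let S be an s×s real matrix, h ∈ ℝ^s, A an (n+1)×(n+1) real matrix, b, l, g column vectors with b, l ∈ ℝ^{n+1} and g ∈ ℝ^s, c = e₁ᵀ the first-coordinate row vector in ℝ^{n+1}, and F an s×s real matrix, with both F and A − l·c Hurwitz. Let Q be an (n+1)×s real matrix with Q·S = (A − l·c)·Q + b·hᵀ, and let M be an invertible s×s real matrix with M·S − F·M = g·Q₍₁₎, where Q₍₁₎ denotes the first row of Q. Set ψ_uᵀ := hᵀ·M⁻¹. Suppose u : ℝ → ℝ is continuous and w : ℝ → ℝ^s, x, p : ℝ → ℝ^{n+1}, ξ : ℝ → ℝ^s are differentiable and satisfy for all t ≥ 0: w'(t) = S·w(t), x'(t) = A·x(t) + b·(u(t) + hᵀ·w(t)), p'(t) = A·p(t) + b·u(t) + l·(x₁(t) − p₁(t)), and ξ'(t) = F·ξ(t) + g·(x₁(t) − p₁(t)). Then the disturbance estimate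 d̂₂(t) := ψ_uᵀ·ξ(t) converges exponentially to the disturbance d₂(t) := hᵀ·w(t): there exist C > 0 and λ > 0 such that |ψ_uᵀ·ξ(t) − hᵀ·w(t)| ≤ C·e^{−λ·t} for all t ≥ 0. -/
open scoped Nat
open Polynomial


open Matrix

namespace IADRCaux

attribute [local instance] Matrix.linftyOpNormedRing Matrix.linftyOpNormedAlgebra

variable {m : Type*} [Fintype m] [DecidableEq m]

noncomputable local instance : CompleteSpace (Matrix m m ℂ) :=
  FiniteDimensional.complete ℂ _

lemma exists_eigenvector {B : Matrix m m ℂ} {μ : ℂ} (hμ : μ ∈ spectrum ℂ B) :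
    ∃ v : m → ℂ, v ≠ 0 ∧ B.mulVec v = μ • v := by
  rw [← AlgEquiv.spectrum_eq (Matrix.toLinAlgEquiv' : Matrix m m ℂ ≃ₐ[ℂ] _)] at hμ
  have hev : Module.End.HasEigenvalue (Matrix.toLinAlgEquiv' B) μ :=
    Module.End.hasEigenvalue_iff_mem_spectrum.mpr hμ
  obtain ⟨v, hv⟩ := hev.exists_hasEigenvector
  refine ⟨v, hv.2, ?_⟩
  have := hv.apply_eq_smul
  rwa [Matrix.toLinAlgEquiv'_apply] at this

lemma mulVec_pow_eigen {B : Matrix m m ℂ} {μ : ℂ} {v : m → ℂ}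
    (hv : B.mulVec v = μ • v) (k : ℕ) : (B ^ k).mulVec v = μ ^ k • v := by
  induction k with
  | zero => simp [Matrix.one_mulVec]
  | succ k ih =>
      rw [pow_succ, ← Matrix.mulVec_mulVec, hv, pow_succ]
      rw [Matrix.mulVec_smul, ih, smul_smul, mul_comm]

lemma mulVec_exp_eigen {B : Matrix m m ℂ} {μ : ℂ} {v : m → ℂ}
    (hv : B.mulVec v = μ • v) :
    (NormedSpace.exp B).mulVec v = Complex.exp μ • v := by
  classical
  have hL : HasSum (fun n : ℕ => (n !⁻¹ : ℂ) • B ^ n) (NormedSpace.exp B) :=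
    NormedSpace.exp_series_hasSum_exp' B
  let L : Matrix m m ℂ →ₗ[ℂ] (m → ℂ) :=
    { toFun := fun M => M.mulVec v
      map_add' := fun M N => Matrix.add_mulVec M N v
      map_smul' := fun c M => by simp [Matrix.smul_mulVec] }
  have hLc : Continuous L := L.continuous_of_finiteDimensional
  have h1 : HasSum (fun n : ℕ => ((n !⁻¹ : ℂ) * μ ^ n) • v)
      ((NormedSpace.exp B).mulVec v) := by
    have h2 := (hL.map (⟨L, hLc⟩ : Matrix m m ℂ →L[ℂ] (m → ℂ)) hLc)
    convert h2 using 1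
    funext k
    show ((k !⁻¹ : ℂ) * μ ^ k) • v = ((k !⁻¹ : ℂ) • B ^ k).mulVec v
    rw [Matrix.smul_mulVec, mulVec_pow_eigen hv, smul_smul]
    rfl
  have h3 : HasSum (fun n : ℕ => ((n !⁻¹ : ℂ) * μ ^ n) • v) (Complex.exp μ • v) := by
    have he : HasSum (fun n : ℕ => (n !⁻¹ : ℂ) * μ ^ n) (Complex.exp μ) := by
      have := NormedSpace.exp_series_hasSum_exp' (𝕂 := ℂ) μ
      simpa [smul_eq_mul, Complex.exp_eq_exp_ℂ] using this
    exact he.smul_const v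
  exact h1.unique h3

lemma mulVec_aeval_eigen {B : Matrix m m ℂ} {μ : ℂ} {v : m → ℂ}
    (hv : B.mulVec v = μ • v) (q : ℂ[X]) :
    ((aeval B) q).mulVec v = q.eval μ • v := by
  induction q using Polynomial.induction_on' with
  | add p r hp hr => rw [map_add, Matrix.add_mulVec, hp, hr, eval_add, add_smul]
  | monomial k c =>
      rw [aeval_monomial, eval_monomial]
      rw [Algebra.algebraMap_eq_smul_one, smul_one_mul, Matrix.smul_mulVec,
        mulVec_pow_eigen hv, smul_smul]

lemma exp_mem_aeval_range (B : Matrix m m ℂ) :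
    ∃ q : ℂ[X], (aeval B) q = NormedSpace.exp B := by
  classical
  have hmem : NormedSpace.exp B ∈ Algebra.adjoin ℂ ({B} : Set (Matrix m m ℂ)) := by
    have hcl : IsClosed ((Algebra.adjoin ℂ ({B} : Set (Matrix m m ℂ))).toSubmodule :
        Set (Matrix m m ℂ)) :=
      Submodule.closed_of_finiteDimensional _
    have hL : HasSum (fun n : ℕ => (n !⁻¹ : ℂ) • B ^ n) (NormedSpace.exp B) :=
      NormedSpace.exp_series_hasSum_exp' B
    have := hL.tendsto_sum_nat
    refine hcl.mem_of_tendsto this (Filter.Eventually.of_forall fun k => ?_)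
    refine Submodule.sum_mem _ fun i _ => Submodule.smul_mem _ _ ?_
    exact Subalgebra.pow_mem _ (Algebra.subset_adjoin (Set.mem_singleton B)) i
  rw [Algebra.adjoin_singleton_eq_range_aeval] at hmem
  exact hmem

lemma spectrum_exp_subset [Nonempty m] (B : Matrix m m ℂ) :
    spectrum ℂ (NormedSpace.exp B) ⊆ Complex.exp '' spectrum ℂ B := by
  obtain ⟨q, hq⟩ := exp_mem_aeval_range B
  have hnon : (spectrum ℂ B).Nonempty := spectrum.nonempty B
  have hmap := spectrum.map_polynomial_aeval_of_nonempty B q hnon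
  rw [← hq, hmap]
  rintro z ⟨μ, hμ, rfl⟩
  refine ⟨μ, hμ, ?_⟩
  obtain ⟨v, hv0, hv⟩ := exists_eigenvector hμ
  have h1 : q.eval μ • v = Complex.exp μ • v := by
    rw [← mulVec_aeval_eigen hv q, hq, mulVec_exp_eigen hv]
  exact (smul_left_injective ℂ hv0 h1).symm

end IADRCaux

namespace IADRCaux2
open IADRCaux Filter
variable {m : Type*} [Fintype m] [DecidableEq m]

attribute [local instance] Matrix.linftyOpNormedRing Matrix.linftyOpNormedAlgebra

noncomputable local instance : CompleteSpace (Matrix m m ℂ) :=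
  FiniteDimensional.complete ℂ _

lemma hurwitz_exp_decay [Nonempty m] (B : Matrix m m ℂ)
    (hB : ∀ μ ∈ spectrum ℂ B, μ.re < 0) :
    ∃ C > (0:ℝ), ∃ lam > (0:ℝ), ∀ t : ℝ, 0 ≤ t →
      ‖NormedSpace.exp (t • B)‖ ≤ C * Real.exp (-lam * t) := by
  classical
  set a := NormedSpace.exp B with ha
  -- a bound r0 < 1 on norms of elements of the spectrum of `a`
  obtain ⟨μ₀, hμ₀, hmax⟩ := (spectrum.isCompact B).exists_isMaxOn (spectrum.nonempty B)
    (Complex.continuous_re.continuousOn)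
  set r0 : ℝ := Real.exp μ₀.re with hr0def
  have hr0pos : 0 < r0 := Real.exp_pos _
  have hr0lt : r0 < 1 := by
    have := hB μ₀ hμ₀
    simpa [hr0def] using Real.exp_lt_one_iff.mpr this
  have hspec : ∀ z ∈ spectrum ℂ a, ‖z‖ ≤ r0 := by
    intro z hz
    obtain ⟨μ, hμ, rfl⟩ := spectrum_exp_subset B hz
    rw [Complex.norm_exp]
    exact Real.exp_le_exp.mpr (hmax hμ)
  -- spectral radius bound
  have hsr : spectralRadius ℂ a ≤ ENNReal.ofReal r0 := by
    unfold spectralRadius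
    refine iSup₂_le fun k hk => ?_
    rw [← ENNReal.ofReal_coe_nnreal, coe_nnnorm]
    exact ENNReal.ofReal_le_ofReal (hspec k hk)
  set r : ℝ := (1 + r0) / 2 with hrdef
  have hr0r : r0 < r := by rw [hrdef]; linarith
  have hrpos : 0 < r := lt_trans hr0pos hr0r
  have hr1 : r < 1 := by rw [hrdef]; linarith
  -- Gelfand's formula: eventually ‖a ^ n‖ ≤ r ^ n
  have hgel := spectrum.pow_norm_pow_one_div_tendsto_nhds_spectralRadius a
  have hlt : spectralRadius ℂ a < ENNReal.ofReal r :=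
    lt_of_le_of_lt hsr (ENNReal.ofReal_lt_ofReal_iff hrpos |>.mpr hr0r)
  have hev : ∀ᶠ n : ℕ in atTop, ENNReal.ofReal (‖a ^ n‖ ^ (1 / n : ℝ)) <
      ENNReal.ofReal r := hgel.eventually_lt_const hlt
  obtain ⟨N, hN⟩ := hev.exists_forall_of_atTop
  have hpow : ∀ n : ℕ, N + 1 ≤ n → ‖a ^ n‖ ≤ r ^ n := by
    intro n hn
    have hn0 : (n : ℝ) ≠ 0 := Nat.cast_ne_zero.mpr (by omega)
    have h1 : ‖a ^ n‖ ^ (1 / n : ℝ) < r := by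
      have := hN n (le_trans (Nat.le_succ N) hn)
      rwa [ENNReal.ofReal_lt_ofReal_iff hrpos] at this
    have h2 : (‖a ^ n‖ ^ (1 / n : ℝ)) ^ (n : ℝ) = ‖a ^ n‖ := by
      rw [← Real.rpow_mul (norm_nonneg _), one_div_mul_cancel hn0, Real.rpow_one]
    have h3 : ‖a ^ n‖ ≤ r ^ (n : ℝ) := by
      rw [← h2]
      exact Real.rpow_le_rpow (Real.rpow_nonneg (norm_nonneg _) _) h1.le (Nat.cast_nonneg n)
    rwa [Real.rpow_natCast] at h3
  -- bound on compact time interval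
  have hcont : Continuous fun u : ℝ => NormedSpace.exp (u • B) :=
    NormedSpace.exp_continuous.comp (continuous_id.smul continuous_const)
  obtain ⟨K, hK⟩ := (isCompact_Icc (a := (0:ℝ)) (b := (N + 2 : ℝ))).exists_bound_of_continuousOn
    hcont.continuousOn
  set K' : ℝ := max K 1 with hK'def
  have hK'pos : 0 < K' := lt_of_lt_of_le one_pos (le_max_right _ _)
  have hKb : ∀ u : ℝ, u ∈ Set.Icc (0:ℝ) (N + 2 : ℝ) →
      ‖NormedSpace.exp (u • B)‖ ≤ K' := fun u hu =>
    le_trans (hK u hu) (le_max_left _ _)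
  set lam : ℝ := -Real.log r with hlamdef
  have hlampos : 0 < lam := by
    rw [hlamdef]
    simpa using Real.log_neg hrpos hr1
  have hexpR : NormedSpace.exp B = a := rfl
  refine ⟨K' * Real.exp lam + K' * Real.exp (lam * (N + 2)), by positivity, lam, hlampos,
    fun t ht => ?_⟩
  set n : ℕ := ⌊t⌋₊ with hn
  have hfr0 : 0 ≤ t - n := sub_nonneg.mpr (Nat.floor_le ht)
  have hfr1 : t - n ≤ 1 := by
    have := Nat.lt_floor_add_one t
    linarith
  have hsplit : NormedSpace.exp (t • B) =
      NormedSpace.exp ((t - n) • B) * a ^ n := by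
    erw [← hexpR, ← NormedSpace.exp_nsmul, ← Nat.cast_smul_eq_nsmul ℝ,
      ← NormedSpace.exp_add_of_commute (((Commute.refl B).smul_left _).smul_right _)]
    congr 1
    rw [← add_smul]
    ring_nf
  have hfrK : ‖NormedSpace.exp ((t - n) • B)‖ ≤ K' :=
    hKb _ ⟨hfr0, le_trans hfr1 (by linarith [Nat.cast_nonneg (α := ℝ) N])⟩
  rcases le_or_gt (N + 1) n with hcase | hcase
  · -- large time
    have h1 : ‖a ^ n‖ ≤ r ^ n := hpow n hcase
    have h2 : (r : ℝ) ^ n ≤ Real.exp lam * Real.exp (-lam * t) := by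
      have hn1 : t - 1 ≤ (n : ℝ) := (Nat.sub_one_lt_floor t).le
      calc (r : ℝ) ^ n = r ^ (n : ℝ) := by rw [Real.rpow_natCast]
        _ ≤ r ^ (t - 1) := Real.rpow_le_rpow_of_exponent_ge hrpos hr1.le hn1
        _ = Real.exp (Real.log r * (t - 1)) := by rw [Real.rpow_def_of_pos hrpos]
        _ = Real.exp lam * Real.exp (-lam * t) := by
            rw [← Real.exp_add]; congr 1; rw [hlamdef]; ring
    calc ‖NormedSpace.exp (t • B)‖ ≤ K' * ‖a ^ n‖ := by
          rw [hsplit]; exact le_trans (norm_mul_le _ _)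
            (mul_le_mul_of_nonneg_right hfrK (norm_nonneg _))
      _ ≤ K' * (Real.exp lam * Real.exp (-lam * t)) :=
          mul_le_mul_of_nonneg_left (le_trans h1 h2) hK'pos.le
      _ ≤ _ := by
          have : 0 ≤ K' * Real.exp (lam * (N + 2)) * Real.exp (-lam * t) := by positivity
          nlinarith [Real.exp_pos (-lam * t), Real.exp_pos lam]
  · -- small time
    have htN : t ≤ (N : ℝ) + 2 := by
      have h3 : t < n + 1 := Nat.lt_floor_add_one t
      have h4 : (n : ℝ) ≤ N := by exact_mod_cast Nat.lt_succ_iff.mp hcase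
      linarith
    have h1 : ‖NormedSpace.exp (t • B)‖ ≤ K' := hKb t ⟨ht, htN⟩
    have h2 : (1:ℝ) ≤ Real.exp (lam * (N + 2)) * Real.exp (-lam * t) := by
      rw [← Real.exp_add, ← Real.exp_zero]
      apply Real.exp_le_exp.mpr
      nlinarith
    calc ‖NormedSpace.exp (t • B)‖ ≤ K' := h1
      _ ≤ K' * (Real.exp (lam * (N + 2)) * Real.exp (-lam * t)) := by
          nlinarith
      _ ≤ _ := by
          have : 0 ≤ K' * Real.exp lam * Real.exp (-lam * t) := by positivity
          nlinarith [Real.exp_pos (-lam * t)]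

end IADRCaux2

namespace IADRCode
open Filter Set
variable {m : Type*} [Fintype m] [DecidableEq m]

attribute [local instance] Matrix.linftyOpNormedRing Matrix.linftyOpNormedAlgebra

noncomputable local instance : CompleteSpace (Matrix m m ℂ) :=
  FiniteDimensional.complete ℂ _

/-- The continuous linear map sending a matrix `M` to the continuous linear map `M.mulVec`. -/
noncomputable def mvCLM : Matrix m m ℂ →L[ℝ] ((m → ℂ) →L[ℝ] (m → ℂ)) :=
  LinearMap.toContinuousLinearMap
  { toFun := fun M => LinearMap.toContinuousLinearMap ((Matrix.mulVecLin M).restrictScalars ℝ)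
    map_add' := fun M N => by
      ext v
      simp [Matrix.add_mulVec]
    map_smul' := fun c M => by
      ext v i
      simp [Matrix.mulVec, dotProduct, Finset.smul_sum, Matrix.smul_apply, smul_mul_assoc,
        mul_assoc] }

@[simp] lemma mvCLM_apply (M : Matrix m m ℂ) (v : m → ℂ) : mvCLM M v = M.mulVec v := rfl

lemma ode_solution_eq_exp {B : Matrix m m ℂ} {z : ℝ → m → ℂ}
    (hz : ∀ t : ℝ, 0 ≤ t → HasDerivAt z (B.mulVec (z t)) t) :
    ∀ t : ℝ, 0 ≤ t → z t = (NormedSpace.exp (t • B)).mulVec (z 0) := by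
  intro T hT
  have hEd : ∀ t : ℝ, HasDerivAt (fun u : ℝ => NormedSpace.exp ((-u) • B))
      (-(B * NormedSpace.exp ((-t) • B))) t := by
    intro t
    have h1 : HasDerivAt (fun u : ℝ => NormedSpace.exp (u • B))
        (B * NormedSpace.exp ((-t) • B)) (-t) := hasDerivAt_exp_smul_const' B (-t)
    have h2 : HasDerivAt (fun u : ℝ => -u) (-1 : ℝ) t := (hasDerivAt_id t).neg
    have h3 := h1.scomp t h2
    rw [neg_one_smul] at h3
    exact h3
  have hyd : ∀ t : ℝ, 0 ≤ t → HasDerivAt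
      (fun u => (NormedSpace.exp ((-u) • B)).mulVec (z u)) 0 t := by
    intro t ht
    have hc := mvCLM.hasFDerivAt.comp_hasDerivAt t (hEd t)
    have hder := hc.clm_apply (hz t ht)
    simp only [Function.comp_apply] at hder
    have hcomm : NormedSpace.exp ((-t) • B) * B = B * NormedSpace.exp ((-t) • B) :=
      (((Commute.refl B).smul_right (-t)).exp_right).eq.symm
    have h0 : mvCLM (-(B * NormedSpace.exp ((-t) • B))) (z t) +
        mvCLM (NormedSpace.exp ((-t) • B)) (B.mulVec (z t)) = 0 := by
      rw [mvCLM_apply, mvCLM_apply, Matrix.mulVec_mulVec, Matrix.neg_mulVec, hcomm,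
        neg_add_cancel]
    erw [h0] at hder
    exact hder
  have hconst : (NormedSpace.exp ((-T) • B)).mulVec (z T) =
      (NormedSpace.exp ((-(0:ℝ)) • B)).mulVec (z 0) := by
    rcases eq_or_lt_of_le hT with rfl | hT'
    · rfl
    · have := constant_of_has_deriv_right_zero
        (f := fun u => (NormedSpace.exp ((-u) • B)).mulVec (z u)) (a := 0) (b := T)
        (fun u hu => ((hyd u hu.1).continuousAt).continuousWithinAt)
        (fun u hu => ((hyd u hu.1).hasDerivWithinAt))
      exact this T ⟨hT, le_refl T⟩
  have hy0 : (NormedSpace.exp ((-(0:ℝ)) • B)).mulVec (z 0) = z 0 := by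
    simp [NormedSpace.exp_zero, Matrix.one_mulVec]
  have hinv : NormedSpace.exp (T • B) * NormedSpace.exp ((-T) • B) = 1 := by
    erw [← NormedSpace.exp_add_of_commute (((Commute.refl B).smul_right (-T)).smul_left T),
      ← add_smul]
    simp [NormedSpace.exp_zero]
  have hfin : (NormedSpace.exp (T • B)).mulVec
      ((NormedSpace.exp ((-T) • B)).mulVec (z T)) = z T := by
    rw [Matrix.mulVec_mulVec, hinv, Matrix.one_mulVec]
  rw [← hfin, hconst, hy0]

end IADRCode

namespace IADRCmain
open Filter Set IADRCaux IADRCaux2 IADRCode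

section decay
variable {m : Type*} [Fintype m] [DecidableEq m]

attribute [local instance] Matrix.linftyOpNormedRing Matrix.linftyOpNormedAlgebra

noncomputable local instance : CompleteSpace (Matrix m m ℂ) :=
  FiniteDimensional.complete ℂ _

lemma solution_decay [Nonempty m] (B : Matrix m m ℝ)
    (hB : ∀ μ ∈ spectrum ℂ (B.map (algebraMap ℝ ℂ)), μ.re < 0)
    (z : ℝ → m → ℝ) (hz : ∀ t : ℝ, 0 ≤ t → HasDerivAt z (B.mulVec (z t)) t) :
    ∃ C > (0:ℝ), ∃ lam > (0:ℝ), ∀ t : ℝ, 0 ≤ t → ∀ i, |z t i| ≤ C * Real.exp (-lam * t) := by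
  set Bc : Matrix m m ℂ := B.map (algebraMap ℝ ℂ) with hBc
  set zc : ℝ → m → ℂ := fun t i => ((z t i : ℝ) : ℂ) with hzc
  have hzcd : ∀ t : ℝ, 0 ≤ t → HasDerivAt zc (Bc.mulVec (zc t)) t := by
    intro t ht
    refine hasDerivAt_pi.mpr fun i => ?_
    have h1 : HasDerivAt (fun u => z u i) (B.mulVec (z t) i) t :=
      hasDerivAt_pi.mp (hz t ht) i
    have h2 := h1.ofReal_comp
    have h3 : Bc.mulVec (zc t) i = ((B.mulVec (z t) i : ℝ) : ℂ) := by
      simp only [hBc, hzc, Matrix.mulVec, dotProduct, Matrix.map_apply]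
      push_cast
      rfl
    rw [h3]
    exact h2
  obtain ⟨C, hC, lam, hlam, hdec⟩ := hurwitz_exp_decay Bc hB
  refine ⟨C * (‖zc 0‖ + 1), by positivity, lam, hlam, fun t ht i => ?_⟩
  have hsol := ode_solution_eq_exp hzcd t ht
  have h1 : |z t i| = ‖zc t i‖ := by simp [hzc]
  have h2 : ‖zc t i‖ ≤ ‖zc t‖ := norm_le_pi_norm (zc t) i
  have h3 : ‖zc t‖ ≤ C * Real.exp (-lam * t) * ‖zc 0‖ := by
    rw [hsol]
    calc ‖(NormedSpace.exp (t • Bc)).mulVec (zc 0)‖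
        ≤ ‖NormedSpace.exp (t • Bc)‖ * ‖zc 0‖ := Matrix.linfty_opNorm_mulVec _ _
      _ ≤ C * Real.exp (-lam * t) * ‖zc 0‖ :=
          mul_le_mul_of_nonneg_right (hdec t ht) (norm_nonneg _)
  have h4 : C * Real.exp (-lam * t) * ‖zc 0‖ ≤ C * (‖zc 0‖ + 1) * Real.exp (-lam * t) := by
    have he : 0 < Real.exp (-lam * t) := Real.exp_pos _
    nlinarith [norm_nonneg (zc 0)]
  linarith [h1 ▸ le_trans h2 h3]

end decay

lemma spectrum_fromBlocks_subset {ι κ : Type*} [Fintype ι] [Fintype κ]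
    [DecidableEq ι] [DecidableEq κ]
    (X : Matrix ι ι ℂ) (Cm : Matrix κ ι ℂ) (Y : Matrix κ κ ℂ) :
    spectrum ℂ (Matrix.fromBlocks X 0 Cm Y) ⊆ spectrum ℂ X ∪ spectrum ℂ Y := by
  intro μ hμ
  by_contra hcon
  rw [Set.mem_union] at hcon
  push_neg at hcon
  obtain ⟨hX, hY⟩ := hcon
  rw [spectrum.mem_iff] at hμ hX hY
  push_neg at hX hY
  apply hμ
  have hdecomp : algebraMap ℂ (Matrix (ι ⊕ κ) (ι ⊕ κ) ℂ) μ - Matrix.fromBlocks X 0 Cm Y =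
      Matrix.fromBlocks (algebraMap ℂ (Matrix ι ι ℂ) μ - X) 0 (-Cm)
        (algebraMap ℂ (Matrix κ κ ℂ) μ - Y) := by
    rw [Algebra.algebraMap_eq_smul_one, Algebra.algebraMap_eq_smul_one,
      Algebra.algebraMap_eq_smul_one, ← Matrix.fromBlocks_one, Matrix.fromBlocks_smul]
    rw [sub_eq_add_neg, sub_eq_add_neg, sub_eq_add_neg, Matrix.fromBlocks_neg,
      Matrix.fromBlocks_add]
    simp
  rw [hdecomp, Matrix.isUnit_iff_isUnit_det, Matrix.det_fromBlocks_zero₁₂]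
  exact ((Matrix.isUnit_iff_isUnit_det _).mp hX).mul ((Matrix.isUnit_iff_isUnit_det _).mp hY)

end IADRCmain

namespace IADRCmain

lemma vecMulVec_mulVec_eq {ι κ : Type*} [Fintype κ] (a : ι → ℝ) (uu vv : κ → ℝ) :
    (Matrix.vecMulVec a uu).mulVec vv = (uu ⬝ᵥ vv) • a := by
  ext i
  simp only [Matrix.mulVec, Matrix.vecMulVec_apply, dotProduct, Pi.smul_apply,
    smul_eq_mul, Finset.sum_mul]
  exact Finset.sum_congr rfl fun j _ => by ring

lemma mulVec_hasDerivAt {ι κ : Type*} [Fintype ι] [Fintype κ] (R : Matrix ι κ ℝ)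
    {f : ℝ → κ → ℝ} {f' : κ → ℝ} {t : ℝ} (hf : HasDerivAt f f' t) :
    HasDerivAt (fun t => R.mulVec (f t)) (R.mulVec f') t := by
  have h := (LinearMap.toContinuousLinearMap (Matrix.mulVecLin R)).hasFDerivAt.comp_hasDerivAt
    t hf
  exact h

end IADRCmain

/-- **Exponential disturbance estimation (known-`S` case, Procedure 1).** The disturbance
`d₂ = hᵀ·w` generated by the exosystem `w' = S·w` acting on the plant
`x' = A·x + b·(u + d₂)` with output `x₁`, estimated via the extended state observer `p`,
the auxiliary filter `ξ' = F·ξ + g·(x₁ − p₁)` and the gain `ψ_uᵀ = hᵀ·M⁻¹` obtained from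
the Sylvester equations `Q·S = (A − l·c)·Q + b·hᵀ` and `M·S − F·M = g·Q₍₁₎` (with
`c = e₁ᵀ`, and `F`, `A − l·c` Hurwitz, `M` invertible), is recovered exponentially:
`|ψ_uᵀ·ξ(t) − hᵀ·w(t)| ≤ C·e^{−λ·t}` for all `t ≥ 0`. -/
theorem iadrc_disturbance_estimate_exponential (n s : ℕ) (hn : 0 < n) (hs : 0 < s)
    (S : Matrix (Fin s) (Fin s) ℝ) (h : Fin s → ℝ)
    (A : Matrix (Fin (n + 1)) (Fin (n + 1)) ℝ)
    (b l : Fin (n + 1) → ℝ) (g : Fin s → ℝ)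
    (F : Matrix (Fin s) (Fin s) ℝ)
    (hF : IsHurwitz F)
    (hAlc : IsHurwitz (A - Matrix.vecMulVec l (Pi.single 0 1 : Fin (n + 1) → ℝ)))
    (Q : Matrix (Fin (n + 1)) (Fin s) ℝ)
    (hQ : Q * S = (A - Matrix.vecMulVec l (Pi.single 0 1 : Fin (n + 1) → ℝ)) * Q +
      Matrix.vecMulVec b h)
    (M : Matrix (Fin s) (Fin s) ℝ) (hM : IsUnit M.det)
    (hMS : M * S - F * M = Matrix.vecMulVec g (Q 0))
    (u : ℝ → ℝ) (hu : Continuous u)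
    (w : ℝ → Fin s → ℝ) (x p : ℝ → Fin (n + 1) → ℝ) (ξ : ℝ → Fin s → ℝ)
    (hw : ∀ t : ℝ, 0 ≤ t → HasDerivAt w (S.mulVec (w t)) t)
    (hx : ∀ t : ℝ, 0 ≤ t → HasDerivAt x (A.mulVec (x t) + (u t + h ⬝ᵥ w t) • b) t)
    (hp : ∀ t : ℝ, 0 ≤ t →
      HasDerivAt p (A.mulVec (p t) + u t • b + (x t 0 - p t 0) • l) t)
    (hξ : ∀ t : ℝ, 0 ≤ t → HasDerivAt ξ (F.mulVec (ξ t) + (x t 0 - p t 0) • g) t) :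
    ∃ C > (0 : ℝ), ∃ lam > (0 : ℝ), ∀ t : ℝ, 0 ≤ t →
      |Matrix.vecMul h M⁻¹ ⬝ᵥ ξ t - h ⬝ᵥ w t| ≤ C * Real.exp (-lam * t) := by
  classical
  have hsne : Nonempty (Fin s) := ⟨⟨0, hs⟩⟩
  set c : Fin (n + 1) → ℝ := Pi.single 0 1 with hcdef
  set Alc : Matrix (Fin (n + 1)) (Fin (n + 1)) ℝ := A - Matrix.vecMulVec l c with hAlcdef
  set Cm : Matrix (Fin s) (Fin (n + 1)) ℝ := Matrix.vecMulVec g c with hCmdef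
  set 𝔹 : Matrix (Fin (n + 1) ⊕ Fin s) (Fin (n + 1) ⊕ Fin s) ℝ :=
    Matrix.fromBlocks Alc 0 Cm F with hBBdef
  set ε : ℝ → Fin (n + 1) → ℝ := fun t => x t - p t - Q.mulVec (w t) with hεdef
  set ζ : ℝ → Fin s → ℝ := fun t => ξ t - M.mulVec (w t) with hζdef
  set z : ℝ → (Fin (n + 1) ⊕ Fin s) → ℝ := fun t => Sum.elim (ε t) (ζ t) with hzdef
  have hAlcQ : Alc * Q = Q * S - Matrix.vecMulVec b h := eq_sub_of_add_eq hQ.symm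
  have hMSQ : M * S = F * M + Matrix.vecMulVec g (Q 0) := by
    rw [← sub_eq_iff_eq_add']; exact hMS
  have hcdot : ∀ v : Fin (n + 1) → ℝ, c ⬝ᵥ v = v 0 := fun v => by
    rw [hcdef, single_dotProduct, one_mul]
  -- derivative of ε
  have hεd : ∀ t : ℝ, 0 ≤ t → HasDerivAt ε (Alc.mulVec (ε t)) t := by
    intro t ht
    have hd := ((hx t ht).sub (hp t ht)).sub (IADRCmain.mulVec_hasDerivAt Q (hw t ht))
    have key : A.mulVec (x t) + (u t + h ⬝ᵥ w t) • b -
        (A.mulVec (p t) + u t • b + (x t 0 - p t 0) • l) - Q.mulVec (S.mulVec (w t)) =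
        Alc.mulVec (ε t) := by
      have e1 : Alc.mulVec (ε t) =
          (A.mulVec (x t) - A.mulVec (p t) - (x t 0 - p t 0) • l) -
            (Q.mulVec (S.mulVec (w t)) - (h ⬝ᵥ w t) • b) := by
        calc Alc.mulVec (ε t)
            = Alc.mulVec (x t - p t) - Alc.mulVec (Q.mulVec (w t)) := by
              rw [hεdef, Matrix.mulVec_sub]
          _ = (A.mulVec (x t - p t) - (Matrix.vecMulVec l c).mulVec (x t - p t)) -
                (Alc * Q).mulVec (w t) := by
              rw [Matrix.mulVec_mulVec, hAlcdef, Matrix.sub_mulVec]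
          _ = (A.mulVec (x t) - A.mulVec (p t) - (x t 0 - p t 0) • l) -
                (Q.mulVec (S.mulVec (w t)) - (h ⬝ᵥ w t) • b) := by
              rw [Matrix.mulVec_sub, IADRCmain.vecMulVec_mulVec_eq, hcdot, hAlcQ, Matrix.sub_mulVec,
                Matrix.mulVec_mulVec, IADRCmain.vecMulVec_mulVec_eq]
              simp only [Pi.sub_apply]
      rw [e1, add_smul]
      abel
    rw [key] at hd
    exact hd
  -- derivative of ζ
  have hζd : ∀ t : ℝ, 0 ≤ t → HasDerivAt ζ (F.mulVec (ζ t) + ε t 0 • g) t := by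
    intro t ht
    have hd := (hξ t ht).sub (IADRCmain.mulVec_hasDerivAt M (hw t ht))
    have key : F.mulVec (ξ t) + (x t 0 - p t 0) • g - M.mulVec (S.mulVec (w t)) =
        F.mulVec (ζ t) + ε t 0 • g := by
      have e1 : M.mulVec (S.mulVec (w t)) =
          F.mulVec (M.mulVec (w t)) + (Q 0 ⬝ᵥ w t) • g := by
        rw [Matrix.mulVec_mulVec, hMSQ, Matrix.add_mulVec, ← Matrix.mulVec_mulVec,
          IADRCmain.vecMulVec_mulVec_eq]
      have e2 : F.mulVec (ζ t) = F.mulVec (ξ t) - F.mulVec (M.mulVec (w t)) := by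
        rw [hζdef, Matrix.mulVec_sub]
      have e3 : ε t 0 • g = (x t 0 - p t 0) • g - (Q 0 ⬝ᵥ w t) • g := by
        rw [← sub_smul]
        rfl
      rw [e1, e2, e3]
      abel
    rw [key] at hd
    exact hd
  -- combined system
  have hzd : ∀ t : ℝ, 0 ≤ t → HasDerivAt z (𝔹.mulVec (z t)) t := by
    intro t ht
    have hmv : 𝔹.mulVec (z t) =
        Sum.elim (Alc.mulVec (ε t)) (F.mulVec (ζ t) + ε t 0 • g) := by
      rw [hBBdef, hzdef, Matrix.fromBlocks_mulVec]
      simp only [Sum.elim_comp_inl, Sum.elim_comp_inr]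
      rw [Matrix.zero_mulVec, add_zero, hCmdef, IADRCmain.vecMulVec_mulVec_eq, hcdot]
      exact congrArg (Sum.elim _) (add_comm _ _)
    rw [hmv]
    refine hasDerivAt_pi.mpr fun i => ?_
    cases i with
    | inl i => exact hasDerivAt_pi.mp (hεd t ht) i
    | inr j => exact hasDerivAt_pi.mp (hζd t ht) j
  -- Hurwitz property of the combined matrix
  have h𝔹 : ∀ μ ∈ spectrum ℂ (𝔹.map (algebraMap ℝ ℂ)), μ.re < 0 := by
    intro μ hμ
    have hmap : 𝔹.map (algebraMap ℝ ℂ) =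
        Matrix.fromBlocks (Alc.map (algebraMap ℝ ℂ)) 0 (Cm.map (algebraMap ℝ ℂ))
          (F.map (algebraMap ℝ ℂ)) := by
      rw [hBBdef, Matrix.fromBlocks_map]
      congr 1
    rw [hmap] at hμ
    rcases IADRCmain.spectrum_fromBlocks_subset _ _ _ hμ with hμ' | hμ'
    · exact hAlc μ hμ'
    · exact hF μ hμ'
  obtain ⟨C0, hC0, lam, hlam, hdec⟩ := IADRCmain.solution_decay 𝔹 h𝔹 z hzd
  -- final estimate
  set ψ : Fin s → ℝ := Matrix.vecMul h M⁻¹ with hψdef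
  have hψM : Matrix.vecMul ψ M = h := by
    rw [hψdef, Matrix.vecMul_vecMul, Matrix.nonsing_inv_mul M hM, Matrix.vecMul_one]
  refine ⟨(∑ i, |ψ i|) * C0 + 1, by positivity, lam, hlam, fun t ht => ?_⟩
  have hrepr : Matrix.vecMul h M⁻¹ ⬝ᵥ ξ t - h ⬝ᵥ w t = ψ ⬝ᵥ ζ t := by
    rw [hζdef]
    show ψ ⬝ᵥ ξ t - h ⬝ᵥ w t = ψ ⬝ᵥ (ξ t - M.mulVec (w t))
    rw [dotProduct_sub, Matrix.dotProduct_mulVec, hψM]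
  rw [hrepr]
  have hbound : ∀ i, |ζ t i| ≤ C0 * Real.exp (-lam * t) := fun i => hdec t ht (Sum.inr i)
  calc |ψ ⬝ᵥ ζ t| ≤ ∑ i, |ψ i * ζ t i| := Finset.abs_sum_le_sum_abs _ _
    _ = ∑ i, |ψ i| * |ζ t i| := by simp [abs_mul]
    _ ≤ ∑ i, |ψ i| * (C0 * Real.exp (-lam * t)) :=
        Finset.sum_le_sum fun i _ => mul_le_mul_of_nonneg_left (hbound i) (abs_nonneg _)
    _ = (∑ i, |ψ i|) * C0 * Real.exp (-lam * t) := by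
        rw [← Finset.sum_mul]; ring
    _ ≤ ((∑ i, |ψ i|) * C0 + 1) * Real.exp (-lam * t) := by
        have := Real.exp_pos (-lam * t)
        nlinarith
end
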